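/- arXiv:2501.13747 — 4 statements merged into one kernel-verified Lean document; each statement's English description precedes it below -/
import Mathlib

section
/- Let (⇀, ↼) be a matched pair of actions on a Hopf algebra H over a field k with antipode S, and let r be the associated Yang–Baxter operator. Then r∘r = id_{H⊗H} if and only if x ↼ y = S(x₁ ⇀ y) ⇀ x₂ for all x, y ∈ H. -/
open TensorProduct

noncomputable section

variable (k H : Type) [Field k] [Ring H] [HopfAlgebra k H]

/-- The map `x ⊗ y ↦ Σ (x₁ ⊗ y₁) ⊗ (x₂ ⊗ y₂)` (Sweedler notation). -/
def sweedler2 : H ⊗[k] H →ₗ[k] (H ⊗[k] H) ⊗[k] (H ⊗[k] H) :=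
  (TensorProduct.tensorTensorTensorComm k H H H H).toLinearMap ∘ₗ
    TensorProduct.map Coalgebra.comul Coalgebra.comul

variable {k H}

/-- `f : H ⊗ H →ₗ H`, written `f (x ⊗ₜ y) = x ⇀ y`, is a left `H`-module coalgebra
action of `H` on itself. -/
structure IsLeftModuleCoalgebraAction (f : H ⊗[k] H →ₗ[k] H) : Prop where
  /-- `x ⇀ (y ⇀ w) = (xy) ⇀ w` -/
  mul_act : f ∘ₗ TensorProduct.map LinearMap.id f ∘ₗ (TensorProduct.assoc k H H H).toLinearMap
    = f ∘ₗ TensorProduct.map (LinearMap.mul' k H) LinearMap.id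
  /-- `1 ⇀ y = y` -/
  one_act : ∀ y : H, f ((1 : H) ⊗ₜ[k] y) = y
  /-- `Δ(x ⇀ y) = (x₁ ⇀ y₁) ⊗ (x₂ ⇀ y₂)` -/
  comul_comp : Coalgebra.comul ∘ₗ f = TensorProduct.map f f ∘ₗ sweedler2 k H
  /-- `ε(x ⇀ y) = ε(x)ε(y)` -/
  counit_comp : Coalgebra.counit ∘ₗ f
    = (TensorProduct.lid k k).toLinearMap ∘ₗ
        TensorProduct.map Coalgebra.counit Coalgebra.counit

/-- `g : H ⊗ H →ₗ H`, written `g (x ⊗ₜ y) = x ↼ y`, is a right `H`-module coalgebra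
action of `H` on itself. -/
structure IsRightModuleCoalgebraAction (g : H ⊗[k] H →ₗ[k] H) : Prop where
  /-- `(x ↼ y) ↼ w = x ↼ (yw)` -/
  act_mul : g ∘ₗ TensorProduct.map g LinearMap.id
    = g ∘ₗ TensorProduct.map LinearMap.id (LinearMap.mul' k H) ∘ₗ
        (TensorProduct.assoc k H H H).toLinearMap
  /-- `x ↼ 1 = x` -/
  act_one : ∀ x : H, g (x ⊗ₜ[k] (1 : H)) = x
  /-- `Δ(x ↼ y) = (x₁ ↼ y₁) ⊗ (x₂ ↼ y₂)` -/
  comul_comp : Coalgebra.comul ∘ₗ g = TensorProduct.map g g ∘ₗ sweedler2 k H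
  /-- `ε(x ↼ y) = ε(x)ε(y)` -/
  counit_comp : Coalgebra.counit ∘ₗ g
    = (TensorProduct.lid k k).toLinearMap ∘ₗ
        TensorProduct.map Coalgebra.counit Coalgebra.counit

/-- `(f, g)` (written `f (x ⊗ₜ y) = x ⇀ y` and `g (x ⊗ₜ y) = x ↼ y`) is a matched pair
of actions on the Hopf algebra `H`. -/
structure IsMatchedPairOfActions (f g : H ⊗[k] H →ₗ[k] H) : Prop where
  left : IsLeftModuleCoalgebraAction f
  right : IsRightModuleCoalgebraAction g
  /-- `x ⇀ (ab) = (x₁ ⇀ a₁)((x₂ ↼ a₂) ⇀ b)` -/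
  mp1 : f ∘ₗ TensorProduct.map LinearMap.id (LinearMap.mul' k H) ∘ₗ
      (TensorProduct.assoc k H H H).toLinearMap
    = LinearMap.mul' k H ∘ₗ
        TensorProduct.map f (f ∘ₗ TensorProduct.map g LinearMap.id) ∘ₗ
        (TensorProduct.assoc k (H ⊗[k] H) (H ⊗[k] H) H).toLinearMap ∘ₗ
        TensorProduct.map (sweedler2 k H) LinearMap.id
  /-- `x ⇀ 1 = ε(x)1` -/
  mp2 : ∀ x : H, f (x ⊗ₜ[k] (1 : H)) = Coalgebra.counit (R := k) x • (1 : H)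
  /-- `(xy) ↼ a = (x ↼ (y₁ ⇀ a₁))(y₂ ↼ a₂)` -/
  mp3 : g ∘ₗ TensorProduct.map (LinearMap.mul' k H) LinearMap.id
    = LinearMap.mul' k H ∘ₗ
        TensorProduct.map (g ∘ₗ TensorProduct.map LinearMap.id f) g ∘ₗ
        (TensorProduct.assoc k H (H ⊗[k] H) (H ⊗[k] H)).symm.toLinearMap ∘ₗ
        TensorProduct.map LinearMap.id (sweedler2 k H) ∘ₗ
        (TensorProduct.assoc k H H H).toLinearMap
  /-- `1 ↼ a = ε(a)1` -/
  mp4 : ∀ a : H, g ((1 : H) ⊗ₜ[k] a) = Coalgebra.counit (R := k) a • (1 : H)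
  /-- `(x₁ ⇀ a₁) ⊗ (x₂ ↼ a₂) = (x₂ ⇀ a₂) ⊗ (x₁ ↼ a₁)` -/
  mp5 : TensorProduct.map f g ∘ₗ sweedler2 k H
    = TensorProduct.map f g ∘ₗ
        (TensorProduct.comm k (H ⊗[k] H) (H ⊗[k] H)).toLinearMap ∘ₗ sweedler2 k H
  /-- `xy = (x₁ ⇀ y₁)(x₂ ↼ y₂)` -/
  factor : LinearMap.mul' k H
    = LinearMap.mul' k H ∘ₗ TensorProduct.map f g ∘ₗ sweedler2 k H

variable (k H)

/-- The Yang–Baxter operator `r (x ⊗ₜ y) = (x₁ ⇀ y₁) ⊗ (x₂ ↼ y₂)` associated to a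
matched pair of actions. -/
def ybOp (f g : H ⊗[k] H →ₗ[k] H) : H ⊗[k] H →ₗ[k] H ⊗[k] H :=
  TensorProduct.map f g ∘ₗ sweedler2 k H

end
noncomputable section
variable {k H : Type} [Field k] [Ring H] [HopfAlgebra k H]

/-- The map `x ⊗ y ↦ Σ (x₁ ⊗ y) ⊗ x₂`. -/
def sweedlerLeft (k H : Type) [Field k] [Ring H] [HopfAlgebra k H] :
    H ⊗[k] H →ₗ[k] (H ⊗[k] H) ⊗[k] H :=
  (TensorProduct.assoc k H H H).symm.toLinearMap ∘ₗ
    TensorProduct.map LinearMap.id (TensorProduct.comm k H H).toLinearMap ∘ₗ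
    (TensorProduct.assoc k H H H).toLinearMap ∘ₗ
    TensorProduct.map Coalgebra.comul LinearMap.id


section YBaux
open Coalgebra

variable {k H : Type} [Field k] [Ring H] [HopfAlgebra k H]

lemma sweedler2_eq_comul : sweedler2 k H = (Coalgebra.comul : H ⊗[k] H →ₗ[k] _) := rfl

/-- `x ⊗ y ↦ ε(y) • x`. -/
noncomputable def c2 : H ⊗[k] H →ₗ[k] H :=
  (TensorProduct.rid k H).toLinearMap ∘ₗ (Coalgebra.counit (R := k) (A := H)).lTensor H

/-- `x ⊗ y ↦ ε(x) • y`. -/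
noncomputable def c1 : H ⊗[k] H →ₗ[k] H :=
  (TensorProduct.lid k H).toLinearMap ∘ₗ (Coalgebra.counit (R := k) (A := H)).rTensor H

/-- `z ↦ ε(z) • 1`. -/
noncomputable def eH : H ⊗[k] H →ₗ[k] H :=
  Algebra.linearMap k H ∘ₗ (Coalgebra.counit (R := k) (A := H ⊗[k] H))

@[simp] lemma c2_tmul (x y : H) : (c2 (x ⊗ₜ[k] y)) = counit (R := k) y • x := by
  simp [c2]

@[simp] lemma c1_tmul (x y : H) : (c1 (x ⊗ₜ[k] y)) = counit (R := k) x • y := by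
  simp [c1]

@[simp] lemma eH_apply (z : H ⊗[k] H) : eH z = counit (R := k) z • (1 : H) := by
  rw [eH, LinearMap.comp_apply, Algebra.linearMap_apply, Algebra.algebraMap_eq_smul_one]

lemma counit_tmul' (x y : H) :
    counit (R := k) (x ⊗ₜ[k] y) = counit (R := k) x * counit (R := k) y := by
  simp [mul_comm]

lemma comul_tmul' (x y : H) :
    comul (R := k) (x ⊗ₜ[k] y) =
      TensorProduct.tensorTensorTensorComm k H H H H
        (comul (R := k) x ⊗ₜ[k] comul (R := k) y) := rfl

lemma sum_counit_smul_right {A : Type} [AddCommGroup A] [Module k A] [Coalgebra k A]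
    {a : A} {ι : Type*} (t : Coalgebra.Repr k a ι) :
    ∑ i ∈ t.index, counit (R := k) (t.left i) • t.right i = a := by
  have h := Coalgebra.sum_counit_tmul_eq (R := k) t
  have h2 := congrArg (TensorProduct.lid k A) h
  simp only [map_sum, lid_tmul] at h2
  simpa using h2

lemma sum_counit_smul_left {A : Type} [AddCommGroup A] [Module k A] [Coalgebra k A]
    {a : A} {ι : Type*} (t : Coalgebra.Repr k a ι) :
    ∑ i ∈ t.index, counit (R := k) (t.right i) • t.left i = a := by
  have h := Coalgebra.sum_tmul_counit_eq (R := k) t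
  have h2 := congrArg (TensorProduct.rid k A) h
  simp only [map_sum, rid_tmul] at h2
  simpa using h2

variable {f g : H ⊗[k] H →ₗ[k] H}

lemma mul_act' (hf : IsLeftModuleCoalgebraAction f) (a b w : H) :
    f (a ⊗ₜ[k] f (b ⊗ₜ[k] w)) = f ((a * b) ⊗ₜ[k] w) := by
  have := LinearMap.congr_fun hf.mul_act ((a ⊗ₜ[k] b) ⊗ₜ[k] w)
  simpa using this

lemma counit_mapcounit :
    (TensorProduct.lid k k).toLinearMap ∘ₗ
      TensorProduct.map (Coalgebra.counit (R := k) (A := H)) Coalgebra.counit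
    = (Coalgebra.counit : H ⊗[k] H →ₗ[k] k) := by
  apply TensorProduct.ext'
  intro x y
  simp [counit_tmul', smul_eq_mul, mul_comm]

lemma comul_f (hf : IsLeftModuleCoalgebraAction f) {w : H ⊗[k] H} {ι : Type*} (t : Coalgebra.Repr k w ι) :
    comul (R := k) (f w) = ∑ i ∈ t.index, f (t.left i) ⊗ₜ[k] f (t.right i) := by
  have := LinearMap.congr_fun hf.comul_comp w
  simp only [LinearMap.comp_apply] at this
  rw [this, sweedler2_eq_comul, ← t.eq, map_sum]
  simp

lemma comul_g (hg : IsRightModuleCoalgebraAction g) {w : H ⊗[k] H} {ι : Type*} (t : Coalgebra.Repr k w ι) :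
    comul (R := k) (g w) = ∑ i ∈ t.index, g (t.left i) ⊗ₜ[k] g (t.right i) := by
  have := LinearMap.congr_fun hg.comul_comp w
  simp only [LinearMap.comp_apply] at this
  rw [this, sweedler2_eq_comul, ← t.eq, map_sum]
  simp

lemma counit_f (hf : IsLeftModuleCoalgebraAction f) (w : H ⊗[k] H) :
    counit (R := k) (f w) = counit (R := k) w := by
  have := LinearMap.congr_fun hf.counit_comp w
  rw [← counit_mapcounit]
  simpa using this

lemma counit_g (hg : IsRightModuleCoalgebraAction g) (w : H ⊗[k] H) :
    counit (R := k) (g w) = counit (R := k) w := by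
  have := LinearMap.congr_fun hg.counit_comp w
  rw [← counit_mapcounit]
  simpa using this

/-- A representation of `comul (f w)` induced by one of `comul w`. -/
noncomputable def reprPush (φ : H ⊗[k] H →ₗ[k] H)
    (hφ : Coalgebra.comul ∘ₗ φ = TensorProduct.map φ φ ∘ₗ sweedler2 k H)
    {w : H ⊗[k] H} {ι : Type*} (t : Coalgebra.Repr k w ι) : Coalgebra.Repr k (φ w) ι where
  index := t.index
  left := fun i => φ (t.left i)
  right := fun i => φ (t.right i)
  eq := by
    have := LinearMap.congr_fun hφ w
    simp only [LinearMap.comp_apply] at this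
    rw [this, sweedler2_eq_comul, ← t.eq, map_sum]
    simp

lemma sum_antipode_f (hf : IsLeftModuleCoalgebraAction f) {w : H ⊗[k] H}
    {ι : Type*} (t : Coalgebra.Repr k w ι) :
    ∑ i ∈ t.index, HopfAlgebra.antipode (R := k) (f (t.left i)) * f (t.right i)
      = counit (R := k) w • (1 : H) := by
  have := HopfAlgebra.sum_antipode_mul_eq_smul (R := k)
    (reprPush f hf.comul_comp t)
  simpa [reprPush, counit_f hf] using this

lemma sum_f_antipode (hf : IsLeftModuleCoalgebraAction f) {w : H ⊗[k] H}
    {ι : Type*} (t : Coalgebra.Repr k w ι) :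
    ∑ i ∈ t.index, f (t.left i) * HopfAlgebra.antipode (R := k) (f (t.right i))
      = counit (R := k) w • (1 : H) := by
  have := HopfAlgebra.sum_mul_antipode_eq_smul (R := k)
    (reprPush f hf.comul_comp t)
  simpa [reprPush, counit_f hf] using this

lemma ybOp_apply' {w : H ⊗[k] H} {ι : Type*} (t : Coalgebra.Repr k w ι) :
    ybOp k H f g w = ∑ i ∈ t.index, f (t.left i) ⊗ₜ[k] g (t.right i) := by
  show (TensorProduct.map f g ∘ₗ sweedler2 k H) w = _
  simp only [LinearMap.comp_apply]
  rw [sweedler2_eq_comul, ← t.eq, map_sum]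
  simp

lemma c2_comp_ybOp (hg : IsRightModuleCoalgebraAction g) :
    c2 ∘ₗ ybOp k H f g = f := by
  refine LinearMap.ext fun w => ?_
  have t := Coalgebra.Repr.arbitrary k w
  rw [LinearMap.comp_apply, ybOp_apply' t, map_sum]
  simp only [c2_tmul, counit_g hg]
  have h2 := congrArg f (sum_counit_smul_left t)
  rw [map_sum] at h2
  simp only [map_smul] at h2
  exact h2

lemma c1_comp_ybOp (hf : IsLeftModuleCoalgebraAction f) :
    c1 ∘ₗ ybOp k H f g = g := by
  refine LinearMap.ext fun w => ?_
  have t := Coalgebra.Repr.arbitrary k w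
  rw [LinearMap.comp_apply, ybOp_apply' t, map_sum]
  simp only [c1_tmul, counit_f hf]
  have h2 := congrArg g (sum_counit_smul_right t)
  rw [map_sum] at h2
  simp only [map_smul] at h2
  exact h2


lemma mp5' (h : IsMatchedPairOfActions f g) {w : H ⊗[k] H} {ι : Type*} (t : Coalgebra.Repr k w ι) :
    ∑ i ∈ t.index, f (t.left i) ⊗ₜ[k] g (t.right i)
      = ∑ i ∈ t.index, f (t.right i) ⊗ₜ[k] g (t.left i) := by
  have h5 := LinearMap.congr_fun h.mp5 w
  simp only [LinearMap.comp_apply, LinearEquiv.coe_coe] at h5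
  rw [sweedler2_eq_comul, ← t.eq, map_sum, map_sum, map_sum] at h5
  simpa using h5

lemma eH_lact (hf : IsLeftModuleCoalgebraAction f) (χ : H ⊗[k] H →ₗ[k] H) :
    f ∘ₗ TensorProduct.map eH χ ∘ₗ Coalgebra.comul = χ := by
  refine LinearMap.ext fun w => ?_
  have t := Coalgebra.Repr.arbitrary k w
  simp only [LinearMap.comp_apply]
  rw [← t.eq, map_sum, map_sum]
  have : ∀ i ∈ t.index, f (TensorProduct.map eH χ (t.left i ⊗ₜ[k] t.right i))
      = counit (R := k) (t.left i) • χ (t.right i) := by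
    intro i _
    rw [map_tmul, eH_apply, ← TensorProduct.smul_tmul', map_smul, hf.one_act]
  rw [Finset.sum_congr rfl this]
  have h2 := congrArg χ (sum_counit_smul_right t)
  rw [map_sum] at h2
  simp only [map_smul] at h2
  exact h2

lemma lact_assoc (hf : IsLeftModuleCoalgebraAction f) (φ ψ χ : H ⊗[k] H →ₗ[k] H) :
    f ∘ₗ TensorProduct.map (LinearMap.mul' k H ∘ₗ TensorProduct.map φ ψ ∘ₗ Coalgebra.comul) χ
        ∘ₗ Coalgebra.comul
      = f ∘ₗ TensorProduct.map φ (f ∘ₗ TensorProduct.map ψ χ ∘ₗ Coalgebra.comul)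
          ∘ₗ Coalgebra.comul := by
  refine LinearMap.ext fun w => ?_
  have rz := Coalgebra.Repr.arbitrary k w
  have r1 : ∀ i : H ⊗[k] H × H ⊗[k] H, Coalgebra.Repr k (rz.left i) (H ⊗[k] H × H ⊗[k] H) :=
    fun i => Coalgebra.Repr.arbitrary k (rz.left i)
  have r2 : ∀ i : H ⊗[k] H × H ⊗[k] H, Coalgebra.Repr k (rz.right i) (H ⊗[k] H × H ⊗[k] H) :=
    fun i => Coalgebra.Repr.arbitrary k (rz.right i)
  have E3 := Coalgebra.sum_tmul_tmul_eq (R := k) rz r1 r2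
  have EΩ := congrArg (⇑(f ∘ₗ TensorProduct.map (LinearMap.mul' k H ∘ₗ TensorProduct.map φ ψ) χ
      ∘ₗ (TensorProduct.assoc k (H ⊗[k] H) (H ⊗[k] H) (H ⊗[k] H)).symm.toLinearMap)) E3
  simp only [map_sum, LinearMap.comp_apply, LinearEquiv.coe_coe, assoc_symm_tmul,
    map_tmul, LinearMap.mul'_apply] at EΩ
  have hL : (f ∘ₗ TensorProduct.map (LinearMap.mul' k H ∘ₗ TensorProduct.map φ ψ
        ∘ₗ Coalgebra.comul) χ ∘ₗ Coalgebra.comul) w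
      = ∑ i ∈ rz.index, ∑ j ∈ (r1 i).index,
          f ((φ ((r1 i).left j) * ψ ((r1 i).right j)) ⊗ₜ[k] χ (rz.right i)) := by
    simp only [LinearMap.comp_apply]
    rw [← rz.eq, map_sum, map_sum]
    refine Finset.sum_congr rfl fun i _ => ?_
    simp only [map_tmul, LinearMap.comp_apply]
    rw [← (r1 i).eq, map_sum, map_sum, TensorProduct.sum_tmul, map_sum]
    simp only [map_tmul, LinearMap.mul'_apply]
  have hR : (f ∘ₗ TensorProduct.map φ (f ∘ₗ TensorProduct.map ψ χ ∘ₗ Coalgebra.comul)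
        ∘ₗ Coalgebra.comul) w
      = ∑ i ∈ rz.index, ∑ j ∈ (r2 i).index,
          f ((φ (rz.left i) * ψ ((r2 i).left j)) ⊗ₜ[k] χ ((r2 i).right j)) := by
    simp only [LinearMap.comp_apply]
    rw [← rz.eq, map_sum, map_sum]
    refine Finset.sum_congr rfl fun i _ => ?_
    simp only [map_tmul, LinearMap.comp_apply]
    rw [← (r2 i).eq, map_sum, map_sum, TensorProduct.tmul_sum, map_sum]
    simp only [map_tmul]
    exact Finset.sum_congr rfl fun j _ => mul_act' hf _ _ _
  rw [hL, hR]
  exact EΩ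

lemma conv_antipode (hf : IsLeftModuleCoalgebraAction f) :
    LinearMap.mul' k H ∘ₗ TensorProduct.map (HopfAlgebra.antipode (R := k) ∘ₗ f) f
        ∘ₗ Coalgebra.comul = eH := by
  refine LinearMap.ext fun w => ?_
  have t := Coalgebra.Repr.arbitrary k w
  simp only [LinearMap.comp_apply]
  rw [← t.eq, map_sum, map_sum]
  simp only [map_tmul, LinearMap.comp_apply, LinearMap.mul'_apply]
  rw [sum_antipode_f hf t, eH_apply]

lemma conv_antipode' (hf : IsLeftModuleCoalgebraAction f) :
    LinearMap.mul' k H ∘ₗ TensorProduct.map f (HopfAlgebra.antipode (R := k) ∘ₗ f)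
        ∘ₗ Coalgebra.comul = eH := by
  refine LinearMap.ext fun w => ?_
  have t := Coalgebra.Repr.arbitrary k w
  simp only [LinearMap.comp_apply]
  rw [← t.eq, map_sum, map_sum]
  simp only [map_tmul, LinearMap.comp_apply, LinearMap.mul'_apply]
  rw [sum_f_antipode hf t, eH_apply]


lemma comul_tmul_sum {x y : H} {ι κ : Type*} (rx : Coalgebra.Repr k x ι) (ry : Coalgebra.Repr k y κ) :
    comul (R := k) (x ⊗ₜ[k] y) = ∑ i ∈ rx.index, ∑ j ∈ ry.index,
      (rx.left i ⊗ₜ[k] ry.left j) ⊗ₜ[k] (rx.right i ⊗ₜ[k] ry.right j) := by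
  rw [comul_tmul', ← rx.eq, ← ry.eq, TensorProduct.sum_tmul, map_sum]
  refine Finset.sum_congr rfl fun i _ => ?_
  rw [TensorProduct.tmul_sum, map_sum]
  refine Finset.sum_congr rfl fun j _ => ?_
  rw [TensorProduct.tensorTensorTensorComm_tmul]

lemma bridge :
    TensorProduct.map LinearMap.id c2 ∘ₗ (Coalgebra.comul : H ⊗[k] H →ₗ[k] _)
      = sweedlerLeft k H := by
  apply TensorProduct.ext'
  intro x y
  have rx := Coalgebra.Repr.arbitrary k x
  have ry := Coalgebra.Repr.arbitrary k y
  have hR : sweedlerLeft k H (x ⊗ₜ[k] y)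
      = ∑ i ∈ rx.index, (rx.left i ⊗ₜ[k] y) ⊗ₜ[k] rx.right i := by
    simp only [sweedlerLeft, LinearMap.comp_apply, LinearEquiv.coe_coe, map_tmul,
      LinearMap.id_coe, id_eq]
    rw [← rx.eq, TensorProduct.sum_tmul, map_sum, map_sum, map_sum]
    simp [TensorProduct.assoc_tmul, TensorProduct.comm_tmul]
  rw [hR, LinearMap.comp_apply, comul_tmul_sum rx ry, map_sum]
  refine Finset.sum_congr rfl fun i _ => ?_
  rw [map_sum]
  have hterm : ∀ j ∈ ry.index,
      TensorProduct.map LinearMap.id c2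
        ((rx.left i ⊗ₜ[k] ry.left j) ⊗ₜ[k] (rx.right i ⊗ₜ[k] ry.right j))
      = counit (R := k) (ry.right j) •
          ((rx.left i ⊗ₜ[k] ry.left j) ⊗ₜ[k] rx.right i) := by
    intro j _
    rw [map_tmul, c2_tmul, LinearMap.id_coe, id_eq, TensorProduct.tmul_smul]
  rw [Finset.sum_congr rfl hterm]
  have hΦ := congrArg
    (⇑(((TensorProduct.mk k (H ⊗[k] H) H).flip (rx.right i)) ∘ₗ
        (TensorProduct.mk k H H (rx.left i))))
    (sum_counit_smul_left ry)
  rw [map_sum] at hΦ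
  simp only [map_smul, LinearMap.comp_apply, TensorProduct.mk_apply,
    LinearMap.flip_apply] at hΦ
  exact hΦ

lemma lact_SC2 (hf : IsLeftModuleCoalgebraAction f) :
    f ∘ₗ TensorProduct.map (HopfAlgebra.antipode (R := k) ∘ₗ c2) f ∘ₗ Coalgebra.comul
      = c1 := by
  apply TensorProduct.ext'
  intro x y
  have rx := Coalgebra.Repr.arbitrary k x
  have ry := Coalgebra.Repr.arbitrary k y
  simp only [LinearMap.comp_apply]
  rw [comul_tmul_sum rx ry]
  simp only [map_sum]
  have houter : ∀ i ∈ rx.index,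
      (∑ j ∈ ry.index, f (TensorProduct.map (HopfAlgebra.antipode (R := k) ∘ₗ c2) f
        ((rx.left i ⊗ₜ[k] ry.left j) ⊗ₜ[k] (rx.right i ⊗ₜ[k] ry.right j))))
      = f ((HopfAlgebra.antipode (R := k) (rx.left i) * rx.right i) ⊗ₜ[k] y) := by
    intro i _
    have hterm : ∀ j ∈ ry.index,
        f (TensorProduct.map (HopfAlgebra.antipode (R := k) ∘ₗ c2) f
          ((rx.left i ⊗ₜ[k] ry.left j) ⊗ₜ[k] (rx.right i ⊗ₜ[k] ry.right j)))
        = counit (R := k) (ry.left j) •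
            f (HopfAlgebra.antipode (R := k) (rx.left i) ⊗ₜ[k]
                f (rx.right i ⊗ₜ[k] ry.right j)) := by
      intro j _
      rw [map_tmul, LinearMap.comp_apply, c2_tmul, map_smul,
        ← TensorProduct.smul_tmul', map_smul]
    rw [Finset.sum_congr rfl hterm]
    have hΨ := congrArg
      (⇑(f ∘ₗ TensorProduct.mk k H H (HopfAlgebra.antipode (R := k) (rx.left i)) ∘ₗ
          f ∘ₗ TensorProduct.mk k H H (rx.right i)))
      (sum_counit_smul_right ry)
    rw [map_sum] at hΨ
    simp only [map_smul, LinearMap.comp_apply, TensorProduct.mk_apply] at hΨ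
    rw [hΨ, mul_act' hf]
  rw [Finset.sum_congr rfl houter, ← map_sum, ← TensorProduct.sum_tmul,
    HopfAlgebra.sum_antipode_mul_eq_smul rx, ← TensorProduct.smul_tmul', map_smul,
    hf.one_act, c1_tmul]

lemma map_c2_c1_comul :
    TensorProduct.map c2 c1 ∘ₗ (Coalgebra.comul : H ⊗[k] H →ₗ[k] _)
      = LinearMap.id := by
  apply TensorProduct.ext'
  intro x y
  have rx := Coalgebra.Repr.arbitrary k x
  have ry := Coalgebra.Repr.arbitrary k y
  simp only [LinearMap.comp_apply, LinearMap.id_coe, id_eq]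
  rw [comul_tmul_sum rx ry]
  simp only [map_sum]
  have houter : ∀ i ∈ rx.index,
      (∑ j ∈ ry.index, TensorProduct.map c2 c1
        ((rx.left i ⊗ₜ[k] ry.left j) ⊗ₜ[k] (rx.right i ⊗ₜ[k] ry.right j)))
      = counit (R := k) (rx.right i) • (rx.left i ⊗ₜ[k] y) := by
    intro i _
    have hterm : ∀ j ∈ ry.index,
        TensorProduct.map c2 c1
          ((rx.left i ⊗ₜ[k] ry.left j) ⊗ₜ[k] (rx.right i ⊗ₜ[k] ry.right j))
        = counit (R := k) (rx.right i) •
            (rx.left i ⊗ₜ[k] (counit (R := k) (ry.left j) • ry.right j)) := by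
      intro j _
      rw [map_tmul, c2_tmul, c1_tmul, TensorProduct.smul_tmul', TensorProduct.tmul_smul,
        TensorProduct.smul_tmul, TensorProduct.smul_tmul']
    rw [Finset.sum_congr rfl hterm, ← Finset.smul_sum]
    have hΘ := congrArg (⇑(TensorProduct.mk k H H (rx.left i)))
      (sum_counit_smul_right ry)
    rw [map_sum] at hΘ
    simp only [TensorProduct.mk_apply] at hΘ
    rw [hΘ]
  rw [Finset.sum_congr rfl houter]
  have hΦ := congrArg (⇑((TensorProduct.mk k H H).flip y)) (sum_counit_smul_left rx)
  rw [map_sum] at hΦ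
  simp only [map_smul, LinearMap.flip_apply, TensorProduct.mk_apply] at hΦ
  exact hΦ


/-- Apply `comul` to the last tensor factor. -/
noncomputable def Dlast :
    (H ⊗[k] H) ⊗[k] ((H ⊗[k] H) ⊗[k] (H ⊗[k] H)) →ₗ[k]
      (H ⊗[k] H) ⊗[k] ((H ⊗[k] H) ⊗[k] ((H ⊗[k] H) ⊗[k] (H ⊗[k] H))) :=
  LinearMap.lTensor (H ⊗[k] H)
    (LinearMap.lTensor (H ⊗[k] H) (Coalgebra.comul (R := k) (A := H ⊗[k] H)))

/-- Apply `comul` to the middle tensor factor. -/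
noncomputable def Dmid :
    (H ⊗[k] H) ⊗[k] ((H ⊗[k] H) ⊗[k] (H ⊗[k] H)) →ₗ[k]
      (H ⊗[k] H) ⊗[k] ((H ⊗[k] H) ⊗[k] ((H ⊗[k] H) ⊗[k] (H ⊗[k] H))) :=
  LinearMap.lTensor (H ⊗[k] H)
    ((TensorProduct.assoc k (H ⊗[k] H) (H ⊗[k] H) (H ⊗[k] H)).toLinearMap ∘ₗ
      LinearMap.rTensor (H ⊗[k] H) (Coalgebra.comul (R := k) (A := H ⊗[k] H)))

@[simp] lemma Dlast_tmul (x y : H ⊗[k] H) (w : H ⊗[k] H) :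
    Dlast (x ⊗ₜ[k] (y ⊗ₜ[k] w)) = x ⊗ₜ[k] (y ⊗ₜ[k] comul (R := k) w) := rfl

@[simp] lemma Dmid_tmul (x y : H ⊗[k] H) (w : H ⊗[k] H) :
    Dmid (x ⊗ₜ[k] (y ⊗ₜ[k] w)) =
      x ⊗ₜ[k] (TensorProduct.assoc k (H ⊗[k] H) (H ⊗[k] H) (H ⊗[k] H)
        (comul (R := k) y ⊗ₜ[k] w)) := rfl

variable (f g) in
/-- `x ⊗ (y ⊗ (u ⊗ v)) ↦ φ(fx ⊗ gy) ⊗ ψ(fu ⊗ gv)`. -/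
noncomputable def Xi' (φ ψ : H ⊗[k] H →ₗ[k] H) :
    (H ⊗[k] H) ⊗[k] ((H ⊗[k] H) ⊗[k] ((H ⊗[k] H) ⊗[k] (H ⊗[k] H))) →ₗ[k] H ⊗[k] H :=
  TensorProduct.map (φ ∘ₗ TensorProduct.map f g) (ψ ∘ₗ TensorProduct.map f g) ∘ₗ
    (TensorProduct.assoc k (H ⊗[k] H) (H ⊗[k] H) ((H ⊗[k] H) ⊗[k] (H ⊗[k] H))).symm.toLinearMap

variable (f g) in
/-- `x ⊗ (y ⊗ (u ⊗ v)) ↦ φ(fx ⊗ gu) ⊗ ψ(fy ⊗ gv)`. -/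
noncomputable def Xi (φ ψ : H ⊗[k] H →ₗ[k] H) :
    (H ⊗[k] H) ⊗[k] ((H ⊗[k] H) ⊗[k] ((H ⊗[k] H) ⊗[k] (H ⊗[k] H))) →ₗ[k] H ⊗[k] H :=
  Xi' f g φ ψ ∘ₗ LinearMap.lTensor (H ⊗[k] H)
    ((TensorProduct.assoc k (H ⊗[k] H) (H ⊗[k] H) (H ⊗[k] H)).toLinearMap ∘ₗ
      LinearMap.rTensor (H ⊗[k] H)
        (TensorProduct.comm k (H ⊗[k] H) (H ⊗[k] H)).toLinearMap ∘ₗ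
      (TensorProduct.assoc k (H ⊗[k] H) (H ⊗[k] H) (H ⊗[k] H)).symm.toLinearMap)

@[simp] lemma Xi'_tmul (φ ψ : H ⊗[k] H →ₗ[k] H) (x y u v : H ⊗[k] H) :
    Xi' f g φ ψ (x ⊗ₜ[k] (y ⊗ₜ[k] (u ⊗ₜ[k] v))) = φ (f x ⊗ₜ[k] g y) ⊗ₜ[k] ψ (f u ⊗ₜ[k] g v) := by
  simp [Xi']

@[simp] lemma Xi_tmul (φ ψ : H ⊗[k] H →ₗ[k] H) (x y u v : H ⊗[k] H) :
    Xi f g φ ψ (x ⊗ₜ[k] (y ⊗ₜ[k] (u ⊗ₜ[k] v))) = φ (f x ⊗ₜ[k] g u) ⊗ₜ[k] ψ (f y ⊗ₜ[k] g v) := by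
  simp [Xi]

set_option maxHeartbeats 1000000 in
set_option synthInstance.maxHeartbeats 200000 in
lemma star (hf : IsLeftModuleCoalgebraAction f) (hg : IsRightModuleCoalgebraAction g)
    (h5 : TensorProduct.map f g ∘ₗ sweedler2 k H
      = TensorProduct.map f g ∘ₗ
          (TensorProduct.comm k (H ⊗[k] H) (H ⊗[k] H)).toLinearMap ∘ₗ sweedler2 k H)
    (φ ψ : H ⊗[k] H →ₗ[k] H) :
    TensorProduct.map φ ψ ∘ₗ Coalgebra.comul ∘ₗ ybOp k H f g
      = TensorProduct.map (φ ∘ₗ ybOp k H f g) (ψ ∘ₗ ybOp k H f g) ∘ₗ Coalgebra.comul := by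
  have mp5' : ∀ {w : H ⊗[k] H} {ι : Type} (t : Coalgebra.Repr k w ι),
      ∑ i ∈ t.index, f (t.left i) ⊗ₜ[k] g (t.right i)
        = ∑ i ∈ t.index, f (t.right i) ⊗ₜ[k] g (t.left i) := by
    intro w _ t
    have h5' := LinearMap.congr_fun h5 w
    simp only [LinearMap.comp_apply, LinearEquiv.coe_coe] at h5'
    rw [sweedler2_eq_comul, ← t.eq, map_sum, map_sum, map_sum] at h5'
    simpa using h5'
  refine LinearMap.ext fun w => ?_
  have rz := Coalgebra.Repr.arbitrary k w
  have r1 : ∀ i : H ⊗[k] H × H ⊗[k] H, Coalgebra.Repr k (rz.left i) (H ⊗[k] H × H ⊗[k] H) :=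
    fun i => Coalgebra.Repr.arbitrary k (rz.left i)
  have r2 : ∀ i : H ⊗[k] H × H ⊗[k] H, Coalgebra.Repr k (rz.right i) (H ⊗[k] H × H ⊗[k] H) :=
    fun i => Coalgebra.Repr.arbitrary k (rz.right i)
  have t : ∀ (i : H ⊗[k] H × H ⊗[k] H) (j : H ⊗[k] H × H ⊗[k] H), Coalgebra.Repr k ((r1 i).right j) (H ⊗[k] H × H ⊗[k] H) :=
    fun i j => Coalgebra.Repr.arbitrary k ((r1 i).right j)
  set S1 := ∑ i ∈ rz.index, ∑ j ∈ (r1 i).index, ∑ l ∈ (r2 i).index,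
      (r1 i).left j ⊗ₜ[k] ((r1 i).right j ⊗ₜ[k] ((r2 i).left l ⊗ₜ[k] (r2 i).right l)) with hS1
  set S2 := ∑ i ∈ rz.index, ∑ j ∈ (r1 i).index, ∑ n ∈ (t i j).index,
      (r1 i).left j ⊗ₜ[k] ((t i j).left n ⊗ₜ[k] ((t i j).right n ⊗ₜ[k] rz.right i)) with hS2
  have E3 := Coalgebra.sum_tmul_tmul_eq (R := k) rz r1 r2
  have hD1 : Dlast (∑ i ∈ rz.index, ∑ j ∈ (r1 i).index,
      (r1 i).left j ⊗ₜ[k] ((r1 i).right j ⊗ₜ[k] rz.right i)) = S1 := by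
    rw [hS1]
    simp only [map_sum, Dlast_tmul]
    refine Finset.sum_congr rfl fun i _ => Finset.sum_congr rfl fun j _ => ?_
    rw [← (r2 i).eq, TensorProduct.tmul_sum, TensorProduct.tmul_sum]
  have hD2 : Dmid (∑ i ∈ rz.index, ∑ j ∈ (r1 i).index,
      (r1 i).left j ⊗ₜ[k] ((r1 i).right j ⊗ₜ[k] rz.right i)) = S2 := by
    rw [hS2]
    simp only [map_sum, Dmid_tmul]
    refine Finset.sum_congr rfl fun i _ => Finset.sum_congr rfl fun j _ => ?_
    rw [← (t i j).eq, TensorProduct.sum_tmul, map_sum, TensorProduct.tmul_sum]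
    simp only [TensorProduct.assoc_tmul]
  have hW : S1 = S2 := by
    rw [← hD1, ← hD2, E3]
    have hV : ∀ i ∈ rz.index, (∑ j ∈ (r2 i).index,
        rz.left i ⊗ₜ[k] ((r2 i).left j ⊗ₜ[k] (r2 i).right j))
        = rz.left i ⊗ₜ[k] (comul (R := k) (rz.right i)) := by
      intro i _
      rw [← TensorProduct.tmul_sum, (r2 i).eq]
    rw [Finset.sum_congr rfl hV, map_sum, map_sum]
    refine Finset.sum_congr rfl fun i _ => ?_
    rw [Dlast, Dmid, LinearMap.lTensor_tmul, LinearMap.lTensor_tmul]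
    refine congrArg (fun X => rz.left i ⊗ₜ[k] X) ?_
    have hco := Coalgebra.coassoc_apply (R := k) (rz.right i)
    simp only [LinearMap.comp_apply, LinearEquiv.coe_coe] at hco ⊢
    exact hco.symm
  have hL : (TensorProduct.map φ ψ ∘ₗ Coalgebra.comul ∘ₗ ybOp k H f g) w
      = Xi f g φ ψ S1 := by
    rw [LinearMap.comp_apply, LinearMap.comp_apply, ybOp_apply' rz, map_sum]
    have hcm : ∀ i ∈ rz.index,
        comul (R := k) (f (rz.left i) ⊗ₜ[k] g (rz.right i))
        = ∑ j ∈ (r1 i).index, ∑ l ∈ (r2 i).index,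
            (f ((r1 i).left j) ⊗ₜ[k] g ((r2 i).left l)) ⊗ₜ[k]
              (f ((r1 i).right j) ⊗ₜ[k] g ((r2 i).right l)) := by
      intro i _
      exact comul_tmul_sum (reprPush f hf.comul_comp (r1 i)) (reprPush g hg.comul_comp (r2 i))
    rw [Finset.sum_congr rfl hcm, hS1]
    simp only [map_sum, map_tmul, Xi_tmul]
  have hR : (TensorProduct.map (φ ∘ₗ ybOp k H f g) (ψ ∘ₗ ybOp k H f g) ∘ₗ
        Coalgebra.comul) w = Xi' f g φ ψ S1 := by
    rw [LinearMap.comp_apply, ← rz.eq, map_sum, hS1]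
    have : ∀ i ∈ rz.index,
        TensorProduct.map (φ ∘ₗ ybOp k H f g) (ψ ∘ₗ ybOp k H f g)
          (rz.left i ⊗ₜ[k] rz.right i)
        = ∑ j ∈ (r1 i).index, ∑ l ∈ (r2 i).index,
            φ (f ((r1 i).left j) ⊗ₜ[k] g ((r1 i).right j)) ⊗ₜ[k]
              ψ (f ((r2 i).left l) ⊗ₜ[k] g ((r2 i).right l)) := by
      intro i _
      rw [map_tmul, LinearMap.comp_apply, LinearMap.comp_apply,
        ybOp_apply' (r1 i), ybOp_apply' (r2 i), map_sum, TensorProduct.sum_tmul]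
      refine Finset.sum_congr rfl fun j _ => ?_
      rw [map_sum, TensorProduct.tmul_sum]
    rw [Finset.sum_congr rfl this]
    simp only [map_sum, Xi'_tmul]
  have hswap : Xi f g φ ψ S2 = Xi' f g φ ψ S2 := by
    rw [hS2]
    simp only [map_sum, Xi_tmul, Xi'_tmul]
    refine Finset.sum_congr rfl fun i _ => Finset.sum_congr rfl fun j _ => ?_
    have hmp := mp5' (t i j)
    have hθ := congrArg
      (⇑(TensorProduct.map (φ ∘ₗ TensorProduct.mk k H H (f ((r1 i).left j)))
          (ψ ∘ₗ (TensorProduct.mk k H H).flip (g (rz.right i))) ∘ₗ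
        (TensorProduct.comm k H H).toLinearMap)) hmp
    simpa only [map_sum, LinearMap.comp_apply, LinearEquiv.coe_coe,
      TensorProduct.comm_tmul, map_tmul, TensorProduct.mk_apply,
      LinearMap.flip_apply] using hθ
  rw [hL, hR, hW, hswap, ← hW]

end YBaux

/-- For a matched pair of actions `(⇀, ↼)` on a Hopf algebra `H`, the associated
Yang–Baxter operator `r` is involutive iff `x ↼ y = S(x₁ ⇀ y) ⇀ x₂` for all `x, y`. -/
theorem ybOp_involutive_iff (f g : H ⊗[k] H →ₗ[k] H)
    (h : IsMatchedPairOfActions f g) :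
    (ybOp k H f g ∘ₗ ybOp k H f g = LinearMap.id) ↔
      g = f ∘ₗ
        TensorProduct.map (HopfAlgebra.antipode (R := k) ∘ₗ f) LinearMap.id ∘ₗ
        sweedlerLeft k H := by
  have hf := h.left
  have hg := h.right
  have hybop : TensorProduct.map f g ∘ₗ (Coalgebra.comul (R := k) (A := H ⊗[k] H))
      = ybOp k H f g := rfl
  have hfin : TensorProduct.map (HopfAlgebra.antipode (R := k) ∘ₗ f) c2 ∘ₗ
      (Coalgebra.comul (R := k) (A := H ⊗[k] H))
      = TensorProduct.map (HopfAlgebra.antipode (R := k) ∘ₗ f) LinearMap.id ∘ₗ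
          sweedlerLeft k H := by
    rw [← bridge, ← LinearMap.comp_assoc, ← TensorProduct.map_comp, LinearMap.comp_id,
      LinearMap.id_comp]
  constructor
  · intro hr
    have hfr : f ∘ₗ ybOp k H f g = c2 := by
      calc f ∘ₗ ybOp k H f g = (c2 ∘ₗ ybOp k H f g) ∘ₗ ybOp k H f g := by
            rw [c2_comp_ybOp hg]
        _ = c2 ∘ₗ (ybOp k H f g ∘ₗ ybOp k H f g) := by rw [LinearMap.comp_assoc]
        _ = c2 := by rw [hr, LinearMap.comp_id]
    have key := lact_assoc hf (HopfAlgebra.antipode (R := k) ∘ₗ f) f g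
    rw [conv_antipode hf, eH_lact hf g, hybop, hfr, hfin] at key
    exact key
  · intro hG
    have hg2 : g = f ∘ₗ TensorProduct.map (HopfAlgebra.antipode (R := k) ∘ₗ f) c2 ∘ₗ
        (Coalgebra.comul (R := k) (A := H ⊗[k] H)) := by
      rw [hG, hfin]
    have hfr : f ∘ₗ ybOp k H f g = c2 := by
      have key := lact_assoc hf f (HopfAlgebra.antipode (R := k) ∘ₗ f) c2
      rw [conv_antipode' hf, eH_lact hf c2, ← hg2, hybop] at key
      exact key.symm
    have hSfr : (HopfAlgebra.antipode (R := k) ∘ₗ f) ∘ₗ ybOp k H f g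
        = HopfAlgebra.antipode (R := k) ∘ₗ c2 := by
      rw [LinearMap.comp_assoc, hfr]
    have hgr : g ∘ₗ ybOp k H f g = c1 := by
      calc g ∘ₗ ybOp k H f g
          = (f ∘ₗ TensorProduct.map (HopfAlgebra.antipode (R := k) ∘ₗ f) c2 ∘ₗ
              Coalgebra.comul) ∘ₗ ybOp k H f g := by rw [← hg2]
        _ = f ∘ₗ TensorProduct.map (HopfAlgebra.antipode (R := k) ∘ₗ f) c2 ∘ₗ
              Coalgebra.comul ∘ₗ ybOp k H f g := by
            rw [LinearMap.comp_assoc, LinearMap.comp_assoc]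
        _ = f ∘ₗ TensorProduct.map ((HopfAlgebra.antipode (R := k) ∘ₗ f) ∘ₗ ybOp k H f g)
              (c2 ∘ₗ ybOp k H f g) ∘ₗ Coalgebra.comul := by
            rw [star hf hg h.mp5]
        _ = f ∘ₗ TensorProduct.map (HopfAlgebra.antipode (R := k) ∘ₗ c2) f ∘ₗ
              Coalgebra.comul := by rw [hSfr, c2_comp_ybOp hg]
        _ = c1 := lact_SC2 hf
    calc ybOp k H f g ∘ₗ ybOp k H f g
        = TensorProduct.map f g ∘ₗ Coalgebra.comul ∘ₗ ybOp k H f g := by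
          rw [← hybop, LinearMap.comp_assoc]
      _ = TensorProduct.map (f ∘ₗ ybOp k H f g) (g ∘ₗ ybOp k H f g) ∘ₗ
            Coalgebra.comul := star hf hg h.mp5 f g
      _ = TensorProduct.map c2 c1 ∘ₗ Coalgebra.comul := by rw [hfr, hgr]
      _ = LinearMap.id := map_c2_c1_comul
end
end

section
/- Let (⇀, ↼) be a matched pair of actions on a Hopf algebra H over a field k with antipode S, and let r be the associated Yang–Baxter operator. If r∘r = id_{H⊗H}, then S(x ↼ y) = S(y) ⇀ S(x) for all x, y ∈ H. -/
open TensorProduct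
set_option synthInstance.maxHeartbeats 400000
set_option maxHeartbeats 1000000

noncomputable section
variable {k H : Type} [Field k] [Ring H] [HopfAlgebra k H]


namespace MPaux

open LinearMap Coalgebra

lemma sweedler2_eq : sweedler2 k H = (Coalgebra.comul : H ⊗[k] H →ₗ[k] _) := rfl

lemma comulC_def : (Coalgebra.comul : H ⊗[k] H →ₗ[k] _) =
    (TensorProduct.tensorTensorTensorComm k H H H H).toLinearMap ∘ₗ
      TensorProduct.map Coalgebra.comul Coalgebra.comul := rfl

/-- convolution product on `Hom(H⊗H, H)`. -/
def conv (φ ψ : H ⊗[k] H →ₗ[k] H) : H ⊗[k] H →ₗ[k] H :=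
  LinearMap.mul' k H ∘ₗ TensorProduct.map φ ψ ∘ₗ Coalgebra.comul

/-- convolution unit. -/
def cunit : H ⊗[k] H →ₗ[k] H := Algebra.linearMap k H ∘ₗ Coalgebra.counit

/-- `x ⊗ y ↦ (x ⊗ y₁) ⊗ y₂`. -/
def bmap : H ⊗[k] H →ₗ[k] (H ⊗[k] H) ⊗[k] H :=
  (TensorProduct.assoc k H H H).symm.toLinearMap ∘ₗ
    (Coalgebra.comul (R := k) (A := H)).lTensor H

/-- `x ⊗ y ↦ ε(x) y`. -/
def Emap : H ⊗[k] H →ₗ[k] H :=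
  (TensorProduct.lid k H).toLinearMap ∘ₗ (Coalgebra.counit (R := k) (A := H)).rTensor H

/-- `x ⊗ y ↦ (x ↼ y₁) ⇀ S(y₂)`. -/
def psi (f g : H ⊗[k] H →ₗ[k] H) : H ⊗[k] H →ₗ[k] H :=
  f ∘ₗ TensorProduct.map g (HopfAlgebra.antipode (R := k)) ∘ₗ bmap

lemma counitC_eq :
    (Coalgebra.counit : H ⊗[k] H →ₗ[k] k) =
      (TensorProduct.lid k k).toLinearMap ∘ₗ
        TensorProduct.map Coalgebra.counit Coalgebra.counit := by
  apply TensorProduct.ext'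
  intro x y
  simp [TensorProduct.counit_tmul, LinearMap.mul'_apply, smul_eq_mul, mul_comm]

lemma mulAssoc :
    LinearMap.mul' k H ∘ₗ (LinearMap.mul' k H).rTensor H =
      LinearMap.mul' k H ∘ₗ (LinearMap.mul' k H).lTensor H ∘ₗ
        (TensorProduct.assoc k H H H).toLinearMap := by
  apply TensorProduct.ext_threefold
  intro x y z
  simp [LinearMap.mul'_apply, mul_assoc]

lemma conv_assoc (φ ψ χ : H ⊗[k] H →ₗ[k] H) :
    conv (conv φ ψ) χ = conv φ (conv ψ χ) := by
  unfold conv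
  apply LinearMap.ext; intro c
  simp only [LinearMap.comp_apply]
  rw [show TensorProduct.map (LinearMap.mul' k H ∘ₗ TensorProduct.map φ ψ ∘ₗ Coalgebra.comul) χ
      = (LinearMap.mul' k H).rTensor H ∘ₗ
          TensorProduct.map (TensorProduct.map φ ψ ∘ₗ Coalgebra.comul) χ by rw [rTensor_comp_map]]
  rw [show TensorProduct.map (TensorProduct.map φ ψ ∘ₗ (Coalgebra.comul : H ⊗[k] H →ₗ[k] _)) χ
      = TensorProduct.map (TensorProduct.map φ ψ) χ ∘ₗ
          (Coalgebra.comul : H ⊗[k] H →ₗ[k] _).rTensor _ by rw [map_comp_rTensor]]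
  simp only [LinearMap.comp_apply]
  rw [← LinearMap.comp_apply (LinearMap.mul' k H), mulAssoc]
  simp only [LinearMap.comp_apply, LinearEquiv.coe_coe]
  rw [← TensorProduct.map_map_assoc, Coalgebra.coassoc_apply]
  rw [show TensorProduct.map φ (TensorProduct.map ψ χ)
        ((Coalgebra.comul : H ⊗[k] H →ₗ[k] _).lTensor _ (Coalgebra.comul c))
      = TensorProduct.map φ (TensorProduct.map ψ χ ∘ₗ Coalgebra.comul) (Coalgebra.comul c) by
    rw [← LinearMap.comp_apply, map_comp_lTensor]]
  rw [show (LinearMap.mul' k H).lTensor H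
        (TensorProduct.map φ (TensorProduct.map ψ χ ∘ₗ Coalgebra.comul) (Coalgebra.comul c))
      = TensorProduct.map φ (LinearMap.mul' k H ∘ₗ TensorProduct.map ψ χ ∘ₗ Coalgebra.comul)
          (Coalgebra.comul c) by
    rw [← LinearMap.comp_apply, lTensor_comp_map]]

lemma conv_cunit (φ : H ⊗[k] H →ₗ[k] H) : conv φ cunit = φ := by
  unfold conv cunit
  apply LinearMap.ext; intro c
  simp only [LinearMap.comp_apply]
  rw [show TensorProduct.map φ (Algebra.linearMap k H ∘ₗ Coalgebra.counit)
      = TensorProduct.map φ (Algebra.linearMap k H) ∘ₗ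
          (Coalgebra.counit : H ⊗[k] H →ₗ[k] k).lTensor _ by rw [map_comp_lTensor]]
  simp only [LinearMap.comp_apply, Coalgebra.lTensor_counit_comul]
  simp [LinearMap.mul'_apply]

lemma cunit_conv (φ : H ⊗[k] H →ₗ[k] H) : conv cunit φ = φ := by
  unfold conv cunit
  apply LinearMap.ext; intro c
  simp only [LinearMap.comp_apply]
  rw [show TensorProduct.map (Algebra.linearMap k H ∘ₗ Coalgebra.counit) φ
      = TensorProduct.map (Algebra.linearMap k H) φ ∘ₗ
          (Coalgebra.counit : H ⊗[k] H →ₗ[k] k).rTensor _ by rw [map_comp_rTensor]]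
  simp only [LinearMap.comp_apply, Coalgebra.rTensor_counit_comul]
  simp [LinearMap.mul'_apply]

lemma conv_antipode_left (p : H ⊗[k] H →ₗ[k] H)
    (hp : Coalgebra.comul ∘ₗ p = TensorProduct.map p p ∘ₗ Coalgebra.comul)
    (hc : Coalgebra.counit ∘ₗ p = (Coalgebra.counit : H ⊗[k] H →ₗ[k] k)) :
    conv (HopfAlgebra.antipode (R := k) ∘ₗ p) p = cunit := by
  unfold conv cunit
  apply LinearMap.ext; intro c
  simp only [LinearMap.comp_apply]
  rw [show TensorProduct.map (HopfAlgebra.antipode (R := k) ∘ₗ p) p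
      = (HopfAlgebra.antipode (R := k)).rTensor H ∘ₗ TensorProduct.map p p by
    rw [rTensor_comp_map]]
  · simp only [LinearMap.comp_apply]
    rw [← LinearMap.comp_apply (TensorProduct.map p p), ← hp]
    simp only [LinearMap.comp_apply, HopfAlgebra.mul_antipode_rTensor_comul_apply]
    rw [← LinearMap.comp_apply Coalgebra.counit p, hc]
    simp [Algebra.linearMap_apply]

lemma conv_antipode_right (p : H ⊗[k] H →ₗ[k] H)
    (hp : Coalgebra.comul ∘ₗ p = TensorProduct.map p p ∘ₗ Coalgebra.comul)
    (hc : Coalgebra.counit ∘ₗ p = (Coalgebra.counit : H ⊗[k] H →ₗ[k] k)) :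
    conv p (HopfAlgebra.antipode (R := k) ∘ₗ p) = cunit := by
  unfold conv cunit
  apply LinearMap.ext; intro c
  simp only [LinearMap.comp_apply]
  rw [show TensorProduct.map p (HopfAlgebra.antipode (R := k) ∘ₗ p)
      = (HopfAlgebra.antipode (R := k)).lTensor H ∘ₗ TensorProduct.map p p by
    rw [lTensor_comp_map]]
  · simp only [LinearMap.comp_apply]
    rw [← LinearMap.comp_apply (TensorProduct.map p p), ← hp]
    simp only [LinearMap.comp_apply, HopfAlgebra.mul_antipode_lTensor_comul_apply]
    rw [← LinearMap.comp_apply Coalgebra.counit p, hc]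
    simp [Algebra.linearMap_apply]

lemma conv_cancel (p q q' : H ⊗[k] H →ₗ[k] H)
    (h1 : conv q p = cunit) (h2 : conv p q' = cunit) : q = q' := by
  have h3 : conv q (conv p q') = q := by rw [h2, conv_cunit]
  rw [← h3, ← conv_assoc, h1, cunit_conv]

lemma ttc_nat1 :
    ((Coalgebra.comul (R := k) (A := H)).lTensor H).lTensor (H ⊗[k] H) ∘ₗ
      (TensorProduct.tensorTensorTensorComm k H H H H).toLinearMap
    = (TensorProduct.tensorTensorTensorComm k H H H (H ⊗[k] H)).toLinearMap ∘ₗ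
        ((Coalgebra.comul (R := k) (A := H)).lTensor H).lTensor (H ⊗[k] H) := by
  apply TensorProduct.ext_fourfold'
  intro a b w z
  rfl

set_option synthInstance.maxHeartbeats 1000000 in
lemma claim4 :
    (TensorProduct.assoc k (H ⊗[k] H) (H ⊗[k] H) H).symm.toLinearMap ∘ₗ
      (TensorProduct.assoc k H H H).symm.toLinearMap.lTensor (H ⊗[k] H) ∘ₗ
      (TensorProduct.tensorTensorTensorComm k H H H (H ⊗[k] H)).toLinearMap
    = (TensorProduct.tensorTensorTensorComm k H H H H).toLinearMap.rTensor H ∘ₗ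
      (TensorProduct.assoc k (H ⊗[k] H) (H ⊗[k] H) H).symm.toLinearMap ∘ₗ
      (TensorProduct.assoc k H H H).symm.toLinearMap.lTensor (H ⊗[k] H) := by
  apply TensorProduct.ext_fourfold'
  intro a b w z
  induction z using TensorProduct.induction_on with
  | zero => simp only [TensorProduct.tmul_zero, map_zero]
  | tmul u v => rfl
  | add s t hs ht => simp only [TensorProduct.tmul_add, map_add, hs, ht]

lemma claim4_apply (t : (H ⊗[k] H) ⊗[k] (H ⊗[k] (H ⊗[k] H))) :
    (TensorProduct.assoc k (H ⊗[k] H) (H ⊗[k] H) H).symm.toLinearMap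
      ((TensorProduct.assoc k H H H).symm.toLinearMap.lTensor (H ⊗[k] H)
        ((TensorProduct.tensorTensorTensorComm k H H H (H ⊗[k] H)).toLinearMap t))
    = (TensorProduct.tensorTensorTensorComm k H H H H).toLinearMap.rTensor H
        ((TensorProduct.assoc k (H ⊗[k] H) (H ⊗[k] H) H).symm.toLinearMap
          ((TensorProduct.assoc k H H H).symm.toLinearMap.lTensor (H ⊗[k] H) t)) := by
  simpa using LinearMap.congr_fun claim4 t

lemma claim3 :
    (TensorProduct.assoc k (H ⊗[k] H) (H ⊗[k] H) H).symm.toLinearMap ∘ₗ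
      bmap.lTensor (H ⊗[k] H) ∘ₗ (Coalgebra.comul : H ⊗[k] H →ₗ[k] _)
    = (Coalgebra.comul : H ⊗[k] H →ₗ[k] _).rTensor H ∘ₗ bmap := by
  have h1 : ∀ t : (H ⊗[k] H) ⊗[k] (H ⊗[k] H),
      (LinearMap.lTensor (H ⊗[k] H) (LinearMap.lTensor H (Coalgebra.comul (R := k) (A := H))))
        ((TensorProduct.tensorTensorTensorComm k H H H H) t)
      = (TensorProduct.tensorTensorTensorComm k H H H (H ⊗[k] H))
          ((LinearMap.lTensor (H ⊗[k] H) (LinearMap.lTensor H Coalgebra.comul)) t) := fun t => by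
    have := LinearMap.congr_fun ttc_nat1 t
    simp only [LinearMap.comp_apply] at this
    exact this
  have h4 : ∀ t : (H ⊗[k] H) ⊗[k] (H ⊗[k] (H ⊗[k] H)),
      (TensorProduct.assoc k (H ⊗[k] H) (H ⊗[k] H) H).symm
        ((LinearMap.lTensor (H ⊗[k] H) (TensorProduct.assoc k H H H).symm.toLinearMap)
          ((TensorProduct.tensorTensorTensorComm k H H H (H ⊗[k] H)) t))
      = (LinearMap.rTensor H (TensorProduct.tensorTensorTensorComm k H H H H).toLinearMap)
          ((TensorProduct.assoc k (H ⊗[k] H) (H ⊗[k] H) H).symm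
            ((LinearMap.lTensor (H ⊗[k] H) (TensorProduct.assoc k H H H).symm.toLinearMap) t)) :=
    fun t => by
    have := LinearMap.congr_fun claim4 t
    simp only [LinearMap.comp_apply] at this
    exact this
  have e2 : (LinearMap.lTensor (H ⊗[k] H) (TensorProduct.assoc k H H H).symm.toLinearMap) ∘ₗ
      (LinearMap.lTensor (H ⊗[k] H) ((Coalgebra.comul (R := k) (A := H)).lTensor H)) ∘ₗ
      (TensorProduct.map Coalgebra.comul Coalgebra.comul)
      = TensorProduct.map Coalgebra.comul
          ((Coalgebra.comul (R := k) (A := H)).rTensor H ∘ₗ Coalgebra.comul) := by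
    rw [lTensor_comp_map, lTensor_comp_map, ← LinearMap.comp_assoc, ← Coalgebra.coassoc_symm,
      LinearMap.comp_assoc]
  have h2 : ∀ c : H ⊗[k] H,
      (LinearMap.lTensor (H ⊗[k] H) (TensorProduct.assoc k H H H).symm.toLinearMap)
        ((LinearMap.lTensor (H ⊗[k] H) ((Coalgebra.comul (R := k) (A := H)).lTensor H))
          ((TensorProduct.map Coalgebra.comul Coalgebra.comul) c))
      = TensorProduct.map Coalgebra.comul
          ((Coalgebra.comul (R := k) (A := H)).rTensor H ∘ₗ Coalgebra.comul) c := fun c => by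
    have := LinearMap.congr_fun e2 c
    simp only [LinearMap.comp_apply] at this
    exact this
  have e3 : (LinearMap.rTensor H (TensorProduct.map (Coalgebra.comul (R := k) (A := H))
        Coalgebra.comul)) ∘ₗ (TensorProduct.assoc k H H H).symm.toLinearMap ∘ₗ
        ((Coalgebra.comul (R := k) (A := H)).lTensor H)
      = (TensorProduct.assoc k (H ⊗[k] H) (H ⊗[k] H) H).symm.toLinearMap ∘ₗ
          TensorProduct.map Coalgebra.comul
            ((Coalgebra.comul (R := k) (A := H)).rTensor H ∘ₗ Coalgebra.comul) := by
    rw [← LinearMap.comp_assoc]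
    rw [show (LinearMap.rTensor H (TensorProduct.map (Coalgebra.comul (R := k) (A := H))
        Coalgebra.comul)) ∘ₗ (TensorProduct.assoc k H H H).symm.toLinearMap
      = (TensorProduct.assoc k (H ⊗[k] H) (H ⊗[k] H) H).symm.toLinearMap ∘ₗ
          TensorProduct.map Coalgebra.comul
            (TensorProduct.map (Coalgebra.comul (R := k) (A := H)) LinearMap.id) from
      TensorProduct.map_map_comp_assoc_symm_eq _ _ _]
    rw [LinearMap.comp_assoc]
    congr 1
    rw [map_comp_lTensor]
    rfl
  have h3 : ∀ c : H ⊗[k] H,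
      (LinearMap.rTensor H (TensorProduct.map (Coalgebra.comul (R := k) (A := H))
          Coalgebra.comul))
        ((TensorProduct.assoc k H H H).symm
          (((Coalgebra.comul (R := k) (A := H)).lTensor H) c))
      = (TensorProduct.assoc k (H ⊗[k] H) (H ⊗[k] H) H).symm
          (TensorProduct.map Coalgebra.comul
            ((Coalgebra.comul (R := k) (A := H)).rTensor H ∘ₗ Coalgebra.comul) c) := fun c => by
    have := LinearMap.congr_fun e3 c
    simp only [LinearMap.comp_apply] at this
    exact this
  apply LinearMap.ext; intro c
  simp only [LinearMap.comp_apply, LinearEquiv.coe_coe, bmap, comulC_def,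
    LinearMap.lTensor_comp, LinearMap.rTensor_comp]
  rw [h1, h4, h2, h3]

lemma claim2_apply (c : H ⊗[k] H) :
    (LinearMap.lTensor (H ⊗[k] H)
        ((HopfAlgebra.antipode (R := k) (A := H)).lTensor (H ⊗[k] H) ∘ₗ bmap))
      (Coalgebra.comul c)
    = (TensorProduct.assoc k (H ⊗[k] H) (H ⊗[k] H) H)
        (TensorProduct.map (Coalgebra.comul (R := k) (A := H ⊗[k] H)) LinearMap.id
          (((HopfAlgebra.antipode (R := k) (A := H)).lTensor (H ⊗[k] H)) (bmap c))) := by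
  rw [LinearMap.lTensor_comp, LinearMap.comp_apply]
  have hb : (bmap.lTensor (H ⊗[k] H)) (Coalgebra.comul c)
      = (TensorProduct.assoc k (H ⊗[k] H) (H ⊗[k] H) H)
          (((Coalgebra.comul : H ⊗[k] H →ₗ[k] _).rTensor H) (bmap c)) := by
    have h := LinearMap.congr_fun claim3 c
    simp only [LinearMap.comp_apply] at h
    exact ((TensorProduct.assoc k (H ⊗[k] H) (H ⊗[k] H) H).symm_apply_eq).mp h
  rw [hb]
  have hc : ∀ t : ((H ⊗[k] H) ⊗[k] (H ⊗[k] H)) ⊗[k] H,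
      (LinearMap.lTensor (H ⊗[k] H) ((HopfAlgebra.antipode (R := k) (A := H)).lTensor (H ⊗[k] H)))
        ((TensorProduct.assoc k (H ⊗[k] H) (H ⊗[k] H) H) t)
      = (TensorProduct.assoc k (H ⊗[k] H) (H ⊗[k] H) H)
          ((HopfAlgebra.antipode (R := k) (A := H)).lTensor ((H ⊗[k] H) ⊗[k] (H ⊗[k] H)) t) := by
    intro t
    have := LinearMap.congr_fun (TensorProduct.map_map_comp_assoc_eq (R := k)
      (LinearMap.id (M := H ⊗[k] H)) (LinearMap.id (M := H ⊗[k] H))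
      (HopfAlgebra.antipode (R := k) (A := H))) t
    simp only [LinearMap.comp_apply, TensorProduct.map_id] at this ⊢
    exact this
  rw [hc]
  congr 1
  have hd := LinearMap.congr_fun
    ((LinearMap.lTensor_comp_rTensor (R := k)
        (f := (Coalgebra.comul : H ⊗[k] H →ₗ[k] _))
        (g := HopfAlgebra.antipode (R := k) (A := H))).trans
      (LinearMap.rTensor_comp_lTensor (R := k)
        (f := (Coalgebra.comul : H ⊗[k] H →ₗ[k] _))
        (g := HopfAlgebra.antipode (R := k) (A := H))).symm) (bmap c)
  simp only [LinearMap.comp_apply] at hd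
  rw [show ((Coalgebra.comul : H ⊗[k] H →ₗ[k] _).rTensor H)
      = TensorProduct.map (Coalgebra.comul : H ⊗[k] H →ₗ[k] _) LinearMap.id from rfl] at hd ⊢
  exact hd

lemma fstep (f : H ⊗[k] H →ₗ[k] H)
    (h2 : ∀ x : H, f (x ⊗ₜ[k] (1 : H)) = Coalgebra.counit (R := k) x • (1 : H)) :
    f ∘ₗ (Algebra.linearMap k H ∘ₗ (Coalgebra.counit (R := k) (A := H))).lTensor H = cunit := by
  apply TensorProduct.ext'
  intro x y
  simp only [LinearMap.comp_apply, LinearMap.lTensor_tmul, Algebra.linearMap_apply, cunit]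
  rw [Algebra.algebraMap_eq_smul_one, TensorProduct.tmul_smul, map_smul, h2,
    Algebra.algebraMap_eq_smul_one]
  simp only [TensorProduct.counit_tmul, LinearMap.comp_apply,
    TensorProduct.map_tmul, LinearMap.mul'_apply, smul_smul, smul_eq_mul]

lemma conv_f_psi (f g : H ⊗[k] H →ₗ[k] H) (h : IsMatchedPairOfActions f g) :
    conv f (psi f g) = cunit := by
  have hmp1 := h.mp1
  rw [sweedler2_eq] at hmp1
  have hpsi : psi f g = (f ∘ₗ TensorProduct.map g LinearMap.id) ∘ₗ
      ((HopfAlgebra.antipode (R := k) (A := H)).lTensor (H ⊗[k] H) ∘ₗ bmap) := by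
    unfold psi
    rw [show TensorProduct.map g (HopfAlgebra.antipode (R := k) (A := H))
        = TensorProduct.map g LinearMap.id ∘ₗ
            (HopfAlgebra.antipode (R := k) (A := H)).lTensor (H ⊗[k] H) by
      rw [map_comp_lTensor, LinearMap.id_comp]]
    simp only [LinearMap.comp_assoc]
  unfold conv
  apply LinearMap.ext; intro c
  simp only [LinearMap.comp_apply]
  rw [hpsi]
  rw [show TensorProduct.map f ((f ∘ₗ TensorProduct.map g LinearMap.id) ∘ₗ
        ((HopfAlgebra.antipode (R := k) (A := H)).lTensor (H ⊗[k] H) ∘ₗ bmap))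
      = TensorProduct.map f (f ∘ₗ TensorProduct.map g LinearMap.id) ∘ₗ
          ((HopfAlgebra.antipode (R := k) (A := H)).lTensor (H ⊗[k] H) ∘ₗ bmap).lTensor
            (H ⊗[k] H) by
    rw [map_comp_lTensor]]
  simp only [LinearMap.comp_apply]
  rw [claim2_apply]
  have hm := LinearMap.congr_fun hmp1
    ((HopfAlgebra.antipode (R := k) (A := H)).lTensor (H ⊗[k] H) (bmap c))
  simp only [LinearMap.comp_apply, LinearEquiv.coe_coe] at hm
  rw [← hm]
  -- now : f (map id μ (A3 (S.lT (bmap c)))) = cunit c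
  have hassoc : ∀ t : H ⊗[k] (H ⊗[k] H),
      (TensorProduct.assoc k H H H)
        ((HopfAlgebra.antipode (R := k) (A := H)).lTensor (H ⊗[k] H)
          ((TensorProduct.assoc k H H H).symm t))
      = ((HopfAlgebra.antipode (R := k) (A := H)).lTensor H).lTensor H t := by
    intro t
    have := LinearMap.congr_fun (TensorProduct.map_map_comp_assoc_symm_eq (R := k)
      (LinearMap.id (M := H)) (LinearMap.id (M := H))
      (HopfAlgebra.antipode (R := k) (A := H))) t
    simp only [LinearMap.comp_apply, TensorProduct.map_id, LinearEquiv.coe_coe] at this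
    show (TensorProduct.assoc k H H H)
        ((TensorProduct.map (LinearMap.id (M := H ⊗[k] H))
            (HopfAlgebra.antipode (R := k) (A := H)))
          ((TensorProduct.assoc k H H H).symm t))
      = TensorProduct.map LinearMap.id
          (TensorProduct.map LinearMap.id (HopfAlgebra.antipode (R := k) (A := H))) t
    rw [this]
    simp
  rw [show bmap (c) = (TensorProduct.assoc k H H H).symm
      (((Coalgebra.comul (R := k) (A := H)).lTensor H) c) from rfl]
  rw [hassoc]
  have efin : TensorProduct.map LinearMap.id (LinearMap.mul' k H) ∘ₗ
      ((HopfAlgebra.antipode (R := k) (A := H)).lTensor H).lTensor H ∘ₗ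
      (Coalgebra.comul (R := k) (A := H)).lTensor H
      = (Algebra.linearMap k H ∘ₗ (Coalgebra.counit (R := k) (A := H))).lTensor H := by
    rw [show TensorProduct.map (LinearMap.id (M := H)) (LinearMap.mul' k H)
        = (LinearMap.mul' k H).lTensor H from rfl]
    rw [← LinearMap.lTensor_comp, ← LinearMap.lTensor_comp]
    rw [show LinearMap.mul' k H ∘ₗ (HopfAlgebra.antipode (R := k) (A := H)).lTensor H ∘ₗ
        Coalgebra.comul = Algebra.linearMap k H ∘ₗ (Coalgebra.counit (R := k) (A := H)) from
      HopfAlgebra.mul_antipode_lTensor_comul]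
  have hfin := LinearMap.congr_fun efin c
  simp only [LinearMap.comp_apply] at hfin
  rw [hfin]
  exact LinearMap.congr_fun (fstep f h.mp2) c

lemma antipode_comp_f (f g : H ⊗[k] H →ₗ[k] H) (h : IsMatchedPairOfActions f g) :
    HopfAlgebra.antipode (R := k) ∘ₗ f = psi f g := by
  have hco := h.left.comul_comp
  rw [sweedler2_eq] at hco
  have hcu := h.left.counit_comp
  rw [← counitC_eq] at hcu
  exact conv_cancel f (HopfAlgebra.antipode (R := k) ∘ₗ f) (psi f g)
    (conv_antipode_left f hco hcu) (conv_f_psi f g h)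

lemma Emap_comp_r (f g : H ⊗[k] H →ₗ[k] H) (h : IsMatchedPairOfActions f g) :
    Emap ∘ₗ ybOp k H f g = g := by
  have hcu := h.left.counit_comp
  rw [← counitC_eq] at hcu
  apply LinearMap.ext; intro c
  show Emap (TensorProduct.map f g (Coalgebra.comul c)) = g c
  unfold Emap
  simp only [LinearMap.comp_apply, LinearEquiv.coe_coe]
  rw [show ((Coalgebra.counit (R := k) (A := H)).rTensor H)
        ((TensorProduct.map f g) (Coalgebra.comul c))
      = (TensorProduct.map ((Coalgebra.counit (R := k) (A := H)) ∘ₗ f) g)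
          (Coalgebra.comul c) by
    rw [← LinearMap.comp_apply, rTensor_comp_map]]
  rw [hcu]
  rw [show (TensorProduct.map (Coalgebra.counit : H ⊗[k] H →ₗ[k] k) g) (Coalgebra.comul c)
      = (g.lTensor k) (((Coalgebra.counit : H ⊗[k] H →ₗ[k] k).rTensor _) (Coalgebra.comul c)) by
    rw [← LinearMap.comp_apply (g.lTensor k), lTensor_comp_rTensor]]
  rw [Coalgebra.rTensor_counit_comul]
  simp

lemma g_comp_r (f g : H ⊗[k] H →ₗ[k] H) (h : IsMatchedPairOfActions f g)
    (hr : ybOp k H f g ∘ₗ ybOp k H f g = LinearMap.id) :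
    g ∘ₗ ybOp k H f g = Emap := by
  calc g ∘ₗ ybOp k H f g = (Emap ∘ₗ ybOp k H f g) ∘ₗ ybOp k H f g := by rw [Emap_comp_r f g h]
    _ = Emap ∘ₗ (ybOp k H f g ∘ₗ ybOp k H f g) := by rw [LinearMap.comp_assoc]
    _ = Emap := by rw [hr, LinearMap.comp_id]

lemma comm_comp_r (f g : H ⊗[k] H →ₗ[k] H) (h : IsMatchedPairOfActions f g) :
    (TensorProduct.comm k H H).toLinearMap ∘ₗ ybOp k H f g
      = TensorProduct.map g f ∘ₗ Coalgebra.comul := by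
  have h5 := h.mp5
  rw [sweedler2_eq] at h5
  have hcc : ∀ x : H ⊗[k] H, (TensorProduct.comm k H H) ((TensorProduct.comm k H H) x) = x := by
    intro x
    induction x using TensorProduct.induction_on with
    | zero => simp
    | tmul a b => simp
    | add s t hs ht => simp [hs, ht]
  apply LinearMap.ext; intro c
  show (TensorProduct.comm k H H) (TensorProduct.map f g (Coalgebra.comul c))
      = TensorProduct.map g f (Coalgebra.comul c)
  have h5c := LinearMap.congr_fun h5 c
  simp only [LinearMap.comp_apply, LinearEquiv.coe_coe] at h5c
  rw [h5c, TensorProduct.map_comm, hcc]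

lemma final2 (f : H ⊗[k] H →ₗ[k] H) (h1 : ∀ y : H, f ((1 : H) ⊗ₜ[k] y) = y) :
    f ∘ₗ TensorProduct.map cunit (HopfAlgebra.antipode (R := k)) ∘ₗ bmap
      = HopfAlgebra.antipode (R := k) ∘ₗ Emap := by
  apply TensorProduct.ext'
  intro x y
  obtain r := Coalgebra.Repr.arbitrary k y
  have hy : ∑ i ∈ r.index, Coalgebra.counit (R := k) (r.left i) • r.right i = y := by
    have h2 : ((TensorProduct.lid k H).toLinearMap ∘ₗ
        (Coalgebra.counit (R := k) (A := H)).rTensor H) (Coalgebra.comul y) = y := by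
      rw [LinearMap.comp_apply, Coalgebra.rTensor_counit_comul]
      simp
    rw [← r.eq, LinearMap.comp_apply, map_sum, map_sum] at h2
    simpa using h2
  have hb : bmap (x ⊗ₜ[k] y)
      = (TensorProduct.assoc k H H H).symm (x ⊗ₜ[k] Coalgebra.comul y) := by
    simp [bmap]
  simp only [LinearMap.comp_apply]
  rw [hb, ← r.eq, TensorProduct.tmul_sum]
  rw [map_sum, map_sum, map_sum]
  simp only [TensorProduct.assoc_symm_tmul, TensorProduct.map_tmul]
  have hcu : ∀ i, (cunit (x ⊗ₜ[k] r.left i) : H)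
      = (Coalgebra.counit (R := k) x * Coalgebra.counit (R := k) (r.left i)) • (1 : H) := by
    intro i
    simp [cunit, TensorProduct.counit_tmul, LinearMap.mul'_apply,
      Algebra.algebraMap_eq_smul_one, mul_comm]
  have hE : Emap (x ⊗ₜ[k] y) = Coalgebra.counit (R := k) x • y := by
    simp [Emap]
  rw [hE]
  calc ∑ i ∈ r.index,
        f (cunit (x ⊗ₜ[k] r.left i) ⊗ₜ[k] HopfAlgebra.antipode (R := k) (r.right i))
      = ∑ i ∈ r.index, Coalgebra.counit (R := k) x •
          (Coalgebra.counit (R := k) (r.left i) •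
            HopfAlgebra.antipode (R := k) (r.right i)) := by
        refine Finset.sum_congr rfl fun i _ => ?_
        rw [hcu i, ← TensorProduct.smul_tmul', map_smul, h1, mul_smul]
    _ = Coalgebra.counit (R := k) x • HopfAlgebra.antipode (R := k)
          (∑ i ∈ r.index, Coalgebra.counit (R := k) (r.left i) • r.right i) := by
        rw [← Finset.smul_sum, map_sum]
        simp_rw [map_smul]
    _ = HopfAlgebra.antipode (R := k) (Coalgebra.counit (R := k) x • y) := by
        rw [hy, map_smul]

lemma p10core (f g : H ⊗[k] H →ₗ[k] H) (h : IsMatchedPairOfActions f g) :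
    f ∘ₗ TensorProduct.map (HopfAlgebra.antipode (R := k) ∘ₗ g) (psi f g) ∘ₗ Coalgebra.comul
      = HopfAlgebra.antipode (R := k) ∘ₗ Emap := by
  have hcog := h.right.comul_comp
  rw [sweedler2_eq] at hcog
  have hcug := h.right.counit_comp
  rw [← counitC_eq] at hcug
  have hJ : conv (HopfAlgebra.antipode (R := k) ∘ₗ g) g = cunit :=
    conv_antipode_left g hcog hcug
  have hma := h.left.mul_act
  apply LinearMap.ext; intro c
  simp only [LinearMap.comp_apply]
  rw [show TensorProduct.map (HopfAlgebra.antipode (R := k) ∘ₗ g) (psi f g)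
      = f.lTensor H ∘ₗ TensorProduct.map (HopfAlgebra.antipode (R := k) ∘ₗ g)
          (TensorProduct.map g (HopfAlgebra.antipode (R := k)) ∘ₗ bmap) by
    rw [lTensor_comp_map]; rfl]
  simp only [LinearMap.comp_apply]
  have hma' : ∀ t : H ⊗[k] (H ⊗[k] H),
      f ((TensorProduct.map LinearMap.id f) t)
      = f ((TensorProduct.map (LinearMap.mul' k H) LinearMap.id)
          ((TensorProduct.assoc k H H H).symm t)) := by
    intro t
    have h0 := LinearMap.congr_fun hma ((TensorProduct.assoc k H H H).symm t)
    simp only [LinearMap.comp_apply, LinearEquiv.coe_coe, LinearEquiv.apply_symm_apply] at h0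
    exact h0
  rw [show (f.lTensor H) (TensorProduct.map (HopfAlgebra.antipode (R := k) ∘ₗ g)
        (TensorProduct.map g (HopfAlgebra.antipode (R := k)) ∘ₗ bmap) (Coalgebra.comul c))
      = (TensorProduct.map LinearMap.id f) (TensorProduct.map
          (HopfAlgebra.antipode (R := k) ∘ₗ g)
          (TensorProduct.map g (HopfAlgebra.antipode (R := k)) ∘ₗ bmap) (Coalgebra.comul c))
      from rfl]
  rw [hma']
  rw [show TensorProduct.map (HopfAlgebra.antipode (R := k) ∘ₗ g)
        (TensorProduct.map g (HopfAlgebra.antipode (R := k)) ∘ₗ bmap)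
      = TensorProduct.map (HopfAlgebra.antipode (R := k) ∘ₗ g)
          (TensorProduct.map g (HopfAlgebra.antipode (R := k))) ∘ₗ
            bmap.lTensor (H ⊗[k] H) by
    rw [map_comp_lTensor]]
  simp only [LinearMap.comp_apply]
  have hnat : ∀ t : (H ⊗[k] H) ⊗[k] ((H ⊗[k] H) ⊗[k] H),
      (TensorProduct.assoc k H H H).symm
        (TensorProduct.map (HopfAlgebra.antipode (R := k) ∘ₗ g)
          (TensorProduct.map g (HopfAlgebra.antipode (R := k))) t)
      = TensorProduct.map
          (TensorProduct.map (HopfAlgebra.antipode (R := k) ∘ₗ g) g)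
          (HopfAlgebra.antipode (R := k))
          ((TensorProduct.assoc k (H ⊗[k] H) (H ⊗[k] H) H).symm t) := by
    intro t
    have h0 := LinearMap.congr_fun (TensorProduct.map_map_comp_assoc_symm_eq
      (HopfAlgebra.antipode (R := k) ∘ₗ g) g (HopfAlgebra.antipode (R := k) (A := H))) t
    simp only [LinearMap.comp_apply, LinearEquiv.coe_coe] at h0
    exact h0.symm
  rw [hnat]
  have h3c := LinearMap.congr_fun claim3 c
  simp only [LinearMap.comp_apply, LinearEquiv.coe_coe] at h3c
  rw [show (TensorProduct.assoc k (H ⊗[k] H) (H ⊗[k] H) H).symm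
        ((bmap.lTensor (H ⊗[k] H)) (Coalgebra.comul c))
      = ((Coalgebra.comul : H ⊗[k] H →ₗ[k] _).rTensor H) (bmap c) from h3c]
  rw [show (TensorProduct.map
        (TensorProduct.map (HopfAlgebra.antipode (R := k) ∘ₗ g) g)
        (HopfAlgebra.antipode (R := k)))
        (((Coalgebra.comul : H ⊗[k] H →ₗ[k] _).rTensor H) (bmap c))
      = (TensorProduct.map
          (TensorProduct.map (HopfAlgebra.antipode (R := k) ∘ₗ g) g ∘ₗ Coalgebra.comul)
          (HopfAlgebra.antipode (R := k))) (bmap c) by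
    rw [← LinearMap.comp_apply, map_comp_rTensor]]
  rw [show (TensorProduct.map (LinearMap.mul' k H) LinearMap.id)
        ((TensorProduct.map
          (TensorProduct.map (HopfAlgebra.antipode (R := k) ∘ₗ g) g ∘ₗ Coalgebra.comul)
          (HopfAlgebra.antipode (R := k))) (bmap c))
      = (TensorProduct.map (LinearMap.mul' k H ∘ₗ
          TensorProduct.map (HopfAlgebra.antipode (R := k) ∘ₗ g) g ∘ₗ Coalgebra.comul)
          (HopfAlgebra.antipode (R := k))) (bmap c) by
    rw [← LinearMap.comp_apply]
    rw [show TensorProduct.map (LinearMap.mul' k H) (LinearMap.id : H →ₗ[k] H)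
        = (LinearMap.mul' k H).rTensor H from rfl, rTensor_comp_map]]
  rw [show LinearMap.mul' k H ∘ₗ
        TensorProduct.map (HopfAlgebra.antipode (R := k) ∘ₗ g) g ∘ₗ Coalgebra.comul
      = cunit from hJ]
  exact LinearMap.congr_fun (final2 f h.left.one_act) c

end MPaux

/-- For a matched pair of actions `(⇀, ↼)` on a Hopf algebra `H` whose associated
Yang–Baxter operator `r` is involutive, `S(x ↼ y) = S(y) ⇀ S(x)` for all `x, y`. -/
theorem antipode_act_of_involutive (f g : H ⊗[k] H →ₗ[k] H)
    (h : IsMatchedPairOfActions f g)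
    (hr : ybOp k H f g ∘ₗ ybOp k H f g = LinearMap.id) :
    HopfAlgebra.antipode (R := k) ∘ₗ g
      = f ∘ₗ
          TensorProduct.map (HopfAlgebra.antipode (R := k)) (HopfAlgebra.antipode (R := k)) ∘ₗ
          (TensorProduct.comm k H H).toLinearMap := by
  have keyA : (HopfAlgebra.antipode (R := k) ∘ₗ g) ∘ₗ ybOp k H f g
      = HopfAlgebra.antipode (R := k) ∘ₗ MPaux.Emap := by
    rw [LinearMap.comp_assoc, MPaux.g_comp_r f g h hr]
  have key1 : (f ∘ₗ
        TensorProduct.map (HopfAlgebra.antipode (R := k)) (HopfAlgebra.antipode (R := k)) ∘ₗ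
        (TensorProduct.comm k H H).toLinearMap) ∘ₗ ybOp k H f g
      = HopfAlgebra.antipode (R := k) ∘ₗ MPaux.Emap := by
    apply LinearMap.ext; intro c
    simp only [LinearMap.comp_apply, LinearEquiv.coe_coe]
    have hc9 := LinearMap.congr_fun (MPaux.comm_comp_r f g h) c
    simp only [LinearMap.comp_apply, LinearEquiv.coe_coe] at hc9
    rw [show ((TensorProduct.comm k H H) ((ybOp k H f g) c)
        : H ⊗[k] H) = TensorProduct.map g f (Coalgebra.comul c) from hc9]
    rw [show (TensorProduct.map (HopfAlgebra.antipode (R := k) (A := H))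
          (HopfAlgebra.antipode (R := k) (A := H)))
          ((TensorProduct.map g f) (Coalgebra.comul c))
        = (TensorProduct.map (HopfAlgebra.antipode (R := k) ∘ₗ g)
            (HopfAlgebra.antipode (R := k) ∘ₗ f)) (Coalgebra.comul c) by
      rw [← LinearMap.comp_apply, ← TensorProduct.map_comp]]
    rw [MPaux.antipode_comp_f f g h]
    have hp := LinearMap.congr_fun (MPaux.p10core f g h) c
    simp only [LinearMap.comp_apply] at hp
    exact hp
  calc HopfAlgebra.antipode (R := k) ∘ₗ g
      = (HopfAlgebra.antipode (R := k) ∘ₗ g) ∘ₗ (ybOp k H f g ∘ₗ ybOp k H f g) := by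
        rw [hr, LinearMap.comp_id]
    _ = ((HopfAlgebra.antipode (R := k) ∘ₗ g) ∘ₗ ybOp k H f g) ∘ₗ ybOp k H f g := by
        simp only [LinearMap.comp_assoc]
    _ = (HopfAlgebra.antipode (R := k) ∘ₗ MPaux.Emap) ∘ₗ ybOp k H f g := by rw [keyA]
    _ = ((f ∘ₗ
          TensorProduct.map (HopfAlgebra.antipode (R := k)) (HopfAlgebra.antipode (R := k)) ∘ₗ
          (TensorProduct.comm k H H).toLinearMap) ∘ₗ ybOp k H f g) ∘ₗ ybOp k H f g := by
        rw [key1]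
    _ = (f ∘ₗ
          TensorProduct.map (HopfAlgebra.antipode (R := k)) (HopfAlgebra.antipode (R := k)) ∘ₗ
          (TensorProduct.comm k H H).toLinearMap) ∘ₗ (ybOp k H f g ∘ₗ ybOp k H f g) := by
        simp only [LinearMap.comp_assoc]
    _ = f ∘ₗ
          TensorProduct.map (HopfAlgebra.antipode (R := k)) (HopfAlgebra.antipode (R := k)) ∘ₗ
          (TensorProduct.comm k H H).toLinearMap := by
        rw [hr, LinearMap.comp_id]
end
end

section
/- In the Kac–Paljutkin algebra H_8, an element x satisfies Δ(x) = x⊗x and ε(x) = 1 if and only if x ∈ {1, g, h, gh}; in particular, the group G(H_8) of group-like elements of H_8 is isomorphic to the Klein four-group C₂×C₂. -/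
open TensorProduct

noncomputable section

/-! ### The Kac–Paljutkin algebra `H₈`, characterized by generators and relations.

A Hopf algebra `H` over `k` together with elements `g h z : H` and a basis
`b = (1, g, h, gh, z, gz, hz, ghz)` satisfying the defining relations of the
Kac–Paljutkin algebra.  Since the comultiplication, counit and antipode of a Hopf
algebra are (anti)algebra morphisms, these data determine the whole Hopf algebra
structure of `H₈`. -/
structure IsKacPaljutkin (k H : Type) [Field k] [Ring H] [HopfAlgebra k H]
    (g h z : H) (b : Module.Basis (Fin 8) k H) : Prop where
  basis_eq : ⇑b = ![1, g, h, g * h, z, g * z, h * z, g * h * z]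
  g_sq : g * g = 1
  h_sq : h * h = 1
  z_sq : z * z = (2 : k)⁻¹ • (1 + g + h - g * h)
  gh_comm : g * h = h * g
  zg : z * g = h * z
  zh : z * h = g * z
  comul_g : Coalgebra.comul (R := k) g = g ⊗ₜ[k] g
  comul_h : Coalgebra.comul (R := k) h = h ⊗ₜ[k] h
  comul_z : Coalgebra.comul (R := k) z
    = (2 : k)⁻¹ • (z ⊗ₜ[k] z + (g * z) ⊗ₜ[k] z + z ⊗ₜ[k] (h * z) - (g * z) ⊗ₜ[k] (h * z))
  counit_g : Coalgebra.counit (R := k) g = 1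
  counit_h : Coalgebra.counit (R := k) h = 1
  counit_z : Coalgebra.counit (R := k) z = 1
  antipode_g : HopfAlgebra.antipode (R := k) g = g
  antipode_h : HopfAlgebra.antipode (R := k) h = h
  antipode_z : HopfAlgebra.antipode (R := k) z = z

/-- The element `z³ = (1/2)(z + gz + hz - ghz)` of the Kac–Paljutkin algebra. -/
def zCubed (k : Type) {H : Type} [Field k] [Ring H] [HopfAlgebra k H] (g h z : H) : H :=
  (2 : k)⁻¹ • (z + g * z + h * z - g * h * z)

end
section AuxKP

variable {k H : Type} [Field k] [Ring H] [HopfAlgebra k H]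

/-- auxiliary map for the Klein four group of grouplikes -/
noncomputable def kpF (g h : H) : ZMod 2 × ZMod 2 → H :=
  fun u => (if u.1 = 0 then 1 else g) * (if u.2 = 0 then 1 else h)

lemma kpF00 (g h : H) : kpF g h (0, 0) = 1 := by simp [kpF]
lemma kpF10 (g h : H) : kpF g h (1, 0) = g := by
  simp [kpF, (by decide : ((1 : ZMod 2) = 0) = False)]
lemma kpF01 (g h : H) : kpF g h (0, 1) = h := by
  simp [kpF, (by decide : ((1 : ZMod 2) = 0) = False)]
lemma kpF11 (g h : H) : kpF g h (1, 1) = g * h := by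
  simp [kpF, (by decide : ((1 : ZMod 2) = 0) = False)]

end AuxKP

set_option maxHeartbeats 3000000 in
/-- In the Kac–Paljutkin algebra `H₈`, an element `x` is group-like
(`Δ(x) = x ⊗ x` and `ε(x) = 1`) iff `x ∈ {1, g, h, gh}`; moreover the group of
group-like elements is isomorphic to the Klein four-group `C₂ × C₂`. -/
theorem grouplikes_of_KacPaljutkin {k H : Type} [Field k] [CharZero k] [IsAlgClosed k]
    [Ring H] [HopfAlgebra k H] (g h z : H) (b : Module.Basis (Fin 8) k H)
    (hKP : IsKacPaljutkin k H g h z b) :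
    (∀ x : H, (Coalgebra.comul (R := k) x = x ⊗ₜ[k] x ∧ Coalgebra.counit (R := k) x = 1) ↔
      (x = 1 ∨ x = g ∨ x = h ∨ x = g * h)) ∧
    ∃ f : ZMod 2 × ZMod 2 → H, Function.Injective f ∧
      (∀ x : H, (Coalgebra.comul (R := k) x = x ⊗ₜ[k] x ∧ Coalgebra.counit (R := k) x = 1)
        ↔ ∃ u, f u = x) ∧
      f 0 = 1 ∧ ∀ u v, f (u + v) = f u * f v := by
  obtain ⟨hb, hg2, hh2, hz2, hgh, hzg, hzh, hΔg, hΔh, hΔz, hεg, hεh, hεz, hSg, hSh, hSz⟩ := hKP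
  have b0 : b 0 = 1 := by rw [hb]; rfl
  have b1 : b 1 = g := by rw [hb]; rfl
  have b2 : b 2 = h := by rw [hb]; rfl
  have b3 : b 3 = g * h := by rw [hb]; rfl
  have b4 : b 4 = z := by rw [hb]; rfl
  have b5 : b 5 = g * z := by rw [hb]; rfl
  have b6 : b 6 = h * z := by rw [hb]; rfl
  have b7 : b 7 = g * h * z := by rw [hb]; rfl
  have m1 : g * (g * z) = z := by rw [← mul_assoc, hg2, one_mul]
  have m2 : g * (h * z) = g * h * z := (mul_assoc g h z).symm
  have m3 : h * (g * z) = g * h * z := by rw [← mul_assoc, ← hgh]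
  have m4 : h * (h * z) = z := by rw [← mul_assoc, hh2, one_mul]
  have mghg : g * h * g = h := by rw [mul_assoc, ← hgh, ← mul_assoc, hg2, one_mul]
  have m6 : g * h * (g * z) = h * z := by rw [← mul_assoc, mghg]
  have m7 : g * h * (h * z) = g * z := by rw [mul_assoc, m4]
  have hΔ3 : Coalgebra.comul (R := k) (g * h) = (g * h) ⊗ₜ[k] (g * h) := by
    rw [Bialgebra.comul_mul, hΔg, hΔh, Algebra.TensorProduct.tmul_mul_tmul]
  have hΔ5 : Coalgebra.comul (R := k) (g * z)
      = (2:k)⁻¹ • ((g*z) ⊗ₜ[k] (g*z) + z ⊗ₜ[k] (g*z) + (g*z) ⊗ₜ[k] (g*h*z) - z ⊗ₜ[k] (g*h*z)) := by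
    rw [Bialgebra.comul_mul, hΔg, hΔz, mul_smul_comm]
    congr 1
    simp only [mul_add, mul_sub, Algebra.TensorProduct.tmul_mul_tmul, m1, m2]
  have hΔ6 : Coalgebra.comul (R := k) (h * z)
      = (2:k)⁻¹ • ((h*z) ⊗ₜ[k] (h*z) + (g*h*z) ⊗ₜ[k] (h*z) + (h*z) ⊗ₜ[k] z - (g*h*z) ⊗ₜ[k] z) := by
    rw [Bialgebra.comul_mul, hΔh, hΔz, mul_smul_comm]
    congr 1
    simp only [mul_add, mul_sub, Algebra.TensorProduct.tmul_mul_tmul, m3, m4]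
  have hΔ7 : Coalgebra.comul (R := k) (g * h * z)
      = (2:k)⁻¹ • ((g*h*z) ⊗ₜ[k] (g*h*z) + (h*z) ⊗ₜ[k] (g*h*z) + (g*h*z) ⊗ₜ[k] (g*z)
          - (h*z) ⊗ₜ[k] (g*z)) := by
    rw [Bialgebra.comul_mul, hΔ3, hΔz, mul_smul_comm]
    congr 1
    simp only [mul_add, mul_sub, Algebra.TensorProduct.tmul_mul_tmul, m6, m7]
  have hε3 : Coalgebra.counit (R := k) (g * h) = 1 := by
    rw [Bialgebra.counit_mul, hεg, hεh, mul_one]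
  have hε5 : Coalgebra.counit (R := k) (g * z) = 1 := by
    rw [Bialgebra.counit_mul, hεg, hεz, mul_one]
  have hε6 : Coalgebra.counit (R := k) (h * z) = 1 := by
    rw [Bialgebra.counit_mul, hεh, hεz, mul_one]
  have hε7 : Coalgebra.counit (R := k) (g * h * z) = 1 := by
    rw [Bialgebra.counit_mul, hε3, hεz, mul_one]
  have part1 : ∀ x : H,
      (Coalgebra.comul (R := k) x = x ⊗ₜ[k] x ∧ Coalgebra.counit (R := k) x = 1) ↔
        (x = 1 ∨ x = g ∨ x = h ∨ x = g * h) := by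
    intro x
    constructor
    · rintro ⟨hcom, hcou⟩
      have hx : (∑ i, b.repr x i • b i) = x := b.sum_repr x
      have d0 : Coalgebra.comul (R := k) (b 0) = b 0 ⊗ₜ[k] b 0 := by
        rw [b0, Bialgebra.comul_one, Algebra.TensorProduct.one_def]
      have d1 : Coalgebra.comul (R := k) (b 1) = b 1 ⊗ₜ[k] b 1 := by rw [b1]; exact hΔg
      have d2 : Coalgebra.comul (R := k) (b 2) = b 2 ⊗ₜ[k] b 2 := by rw [b2]; exact hΔh
      have d3 : Coalgebra.comul (R := k) (b 3) = b 3 ⊗ₜ[k] b 3 := by rw [b3]; exact hΔ3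
      have d4 : Coalgebra.comul (R := k) (b 4)
          = (2:k)⁻¹ • (b 4 ⊗ₜ[k] b 4 + b 5 ⊗ₜ[k] b 4 + b 4 ⊗ₜ[k] b 6 - b 5 ⊗ₜ[k] b 6) := by
        rw [b4, b5, b6]; exact hΔz
      have d5 : Coalgebra.comul (R := k) (b 5)
          = (2:k)⁻¹ • (b 5 ⊗ₜ[k] b 5 + b 4 ⊗ₜ[k] b 5 + b 5 ⊗ₜ[k] b 7 - b 4 ⊗ₜ[k] b 7) := by
        rw [b4, b5, b7]; exact hΔ5
      have d6 : Coalgebra.comul (R := k) (b 6)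
          = (2:k)⁻¹ • (b 6 ⊗ₜ[k] b 6 + b 7 ⊗ₜ[k] b 6 + b 6 ⊗ₜ[k] b 4 - b 7 ⊗ₜ[k] b 4) := by
        rw [b4, b6, b7]; exact hΔ6
      have d7 : Coalgebra.comul (R := k) (b 7)
          = (2:k)⁻¹ • (b 7 ⊗ₜ[k] b 7 + b 6 ⊗ₜ[k] b 7 + b 7 ⊗ₜ[k] b 5 - b 6 ⊗ₜ[k] b 5) := by
        rw [b5, b6, b7]; exact hΔ7
      have hΔx : Coalgebra.comul (R := k) x
          = b.repr x 0 • (b 0 ⊗ₜ[k] b 0) + b.repr x 1 • (b 1 ⊗ₜ[k] b 1)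
            + b.repr x 2 • (b 2 ⊗ₜ[k] b 2) + b.repr x 3 • (b 3 ⊗ₜ[k] b 3)
            + b.repr x 4 • ((2:k)⁻¹ • (b 4 ⊗ₜ[k] b 4 + b 5 ⊗ₜ[k] b 4 + b 4 ⊗ₜ[k] b 6 - b 5 ⊗ₜ[k] b 6))
            + b.repr x 5 • ((2:k)⁻¹ • (b 5 ⊗ₜ[k] b 5 + b 4 ⊗ₜ[k] b 5 + b 5 ⊗ₜ[k] b 7 - b 4 ⊗ₜ[k] b 7))
            + b.repr x 6 • ((2:k)⁻¹ • (b 6 ⊗ₜ[k] b 6 + b 7 ⊗ₜ[k] b 6 + b 6 ⊗ₜ[k] b 4 - b 7 ⊗ₜ[k] b 4))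
            + b.repr x 7 • ((2:k)⁻¹ • (b 7 ⊗ₜ[k] b 7 + b 6 ⊗ₜ[k] b 7 + b 7 ⊗ₜ[k] b 5 - b 6 ⊗ₜ[k] b 5)) := by
        conv_lhs => rw [← hx]
        rw [map_sum, Fin.sum_univ_eight]
        simp only [LinearMap.map_smul, d0, d1, d2, d3, d4, d5, d6, d7]
      have key : ∀ i j : Fin 8,
          ((Module.Basis.tensorProduct b b).repr (Coalgebra.comul (R := k) x)) (i, j)
            = b.repr x i * b.repr x j := by
        intro i j
        rw [hcom, Module.Basis.tensorProduct_repr_tmul_apply, smul_eq_mul, mul_comm]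
      have E00 := key 0 0
      rw [hΔx] at E00
      simp only [map_add, map_smul, map_sub, Finsupp.coe_add, Finsupp.coe_smul, Finsupp.coe_sub, Pi.add_apply, Pi.smul_apply, Pi.sub_apply, Module.Basis.tensorProduct_repr_tmul_apply, Module.Basis.repr_self_apply, smul_eq_mul, Fin.reduceEq, reduceIte, mul_one, mul_zero, zero_mul, add_zero, zero_add, sub_zero, zero_sub, mul_neg, neg_mul, one_mul] at E00
      have E11 := key 1 1
      rw [hΔx] at E11
      simp only [map_add, map_smul, map_sub, Finsupp.coe_add, Finsupp.coe_smul, Finsupp.coe_sub, Pi.add_apply, Pi.smul_apply, Pi.sub_apply, Module.Basis.tensorProduct_repr_tmul_apply, Module.Basis.repr_self_apply, smul_eq_mul, Fin.reduceEq, reduceIte, mul_one, mul_zero, zero_mul, add_zero, zero_add, sub_zero, zero_sub, mul_neg, neg_mul, one_mul] at E11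
      have E22 := key 2 2
      rw [hΔx] at E22
      simp only [map_add, map_smul, map_sub, Finsupp.coe_add, Finsupp.coe_smul, Finsupp.coe_sub, Pi.add_apply, Pi.smul_apply, Pi.sub_apply, Module.Basis.tensorProduct_repr_tmul_apply, Module.Basis.repr_self_apply, smul_eq_mul, Fin.reduceEq, reduceIte, mul_one, mul_zero, zero_mul, add_zero, zero_add, sub_zero, zero_sub, mul_neg, neg_mul, one_mul] at E22
      have E33 := key 3 3
      rw [hΔx] at E33
      simp only [map_add, map_smul, map_sub, Finsupp.coe_add, Finsupp.coe_smul, Finsupp.coe_sub, Pi.add_apply, Pi.smul_apply, Pi.sub_apply, Module.Basis.tensorProduct_repr_tmul_apply, Module.Basis.repr_self_apply, smul_eq_mul, Fin.reduceEq, reduceIte, mul_one, mul_zero, zero_mul, add_zero, zero_add, sub_zero, zero_sub, mul_neg, neg_mul, one_mul] at E33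
      have E44 := key 4 4
      rw [hΔx] at E44
      simp only [map_add, map_smul, map_sub, Finsupp.coe_add, Finsupp.coe_smul, Finsupp.coe_sub, Pi.add_apply, Pi.smul_apply, Pi.sub_apply, Module.Basis.tensorProduct_repr_tmul_apply, Module.Basis.repr_self_apply, smul_eq_mul, Fin.reduceEq, reduceIte, mul_one, mul_zero, zero_mul, add_zero, zero_add, sub_zero, zero_sub, mul_neg, neg_mul, one_mul] at E44
      have E45 := key 4 5
      rw [hΔx] at E45
      simp only [map_add, map_smul, map_sub, Finsupp.coe_add, Finsupp.coe_smul, Finsupp.coe_sub, Pi.add_apply, Pi.smul_apply, Pi.sub_apply, Module.Basis.tensorProduct_repr_tmul_apply, Module.Basis.repr_self_apply, smul_eq_mul, Fin.reduceEq, reduceIte, mul_one, mul_zero, zero_mul, add_zero, zero_add, sub_zero, zero_sub, mul_neg, neg_mul, one_mul] at E45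
      have E46 := key 4 6
      rw [hΔx] at E46
      simp only [map_add, map_smul, map_sub, Finsupp.coe_add, Finsupp.coe_smul, Finsupp.coe_sub, Pi.add_apply, Pi.smul_apply, Pi.sub_apply, Module.Basis.tensorProduct_repr_tmul_apply, Module.Basis.repr_self_apply, smul_eq_mul, Fin.reduceEq, reduceIte, mul_one, mul_zero, zero_mul, add_zero, zero_add, sub_zero, zero_sub, mul_neg, neg_mul, one_mul] at E46
      have E54 := key 5 4
      rw [hΔx] at E54
      simp only [map_add, map_smul, map_sub, Finsupp.coe_add, Finsupp.coe_smul, Finsupp.coe_sub, Pi.add_apply, Pi.smul_apply, Pi.sub_apply, Module.Basis.tensorProduct_repr_tmul_apply, Module.Basis.repr_self_apply, smul_eq_mul, Fin.reduceEq, reduceIte, mul_one, mul_zero, zero_mul, add_zero, zero_add, sub_zero, zero_sub, mul_neg, neg_mul, one_mul] at E54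
      have E56 := key 5 6
      rw [hΔx] at E56
      simp only [map_add, map_smul, map_sub, Finsupp.coe_add, Finsupp.coe_smul, Finsupp.coe_sub, Pi.add_apply, Pi.smul_apply, Pi.sub_apply, Module.Basis.tensorProduct_repr_tmul_apply, Module.Basis.repr_self_apply, smul_eq_mul, Fin.reduceEq, reduceIte, mul_one, mul_zero, zero_mul, add_zero, zero_add, sub_zero, zero_sub, mul_neg, neg_mul, one_mul] at E56
      have E64 := key 6 4
      rw [hΔx] at E64
      simp only [map_add, map_smul, map_sub, Finsupp.coe_add, Finsupp.coe_smul, Finsupp.coe_sub, Pi.add_apply, Pi.smul_apply, Pi.sub_apply, Module.Basis.tensorProduct_repr_tmul_apply, Module.Basis.repr_self_apply, smul_eq_mul, Fin.reduceEq, reduceIte, mul_one, mul_zero, zero_mul, add_zero, zero_add, sub_zero, zero_sub, mul_neg, neg_mul, one_mul] at E64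
      have E75 := key 7 5
      rw [hΔx] at E75
      simp only [map_add, map_smul, map_sub, Finsupp.coe_add, Finsupp.coe_smul, Finsupp.coe_sub, Pi.add_apply, Pi.smul_apply, Pi.sub_apply, Module.Basis.tensorProduct_repr_tmul_apply, Module.Basis.repr_self_apply, smul_eq_mul, Fin.reduceEq, reduceIte, mul_one, mul_zero, zero_mul, add_zero, zero_add, sub_zero, zero_sub, mul_neg, neg_mul, one_mul] at E75
      have two : (2:k) ≠ 0 := two_ne_zero
      have h4 : b.repr x 4 = 0 := by
        rcases mul_eq_zero.mp (show b.repr x 4 * ((2:k)⁻¹ - b.repr x 4) = 0 by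
          linear_combination E44) with hh | hh
        · exact hh
        · exfalso
          have hc4 : b.repr x 4 = (2:k)⁻¹ := by linear_combination -hh
          have hne : b.repr x 4 ≠ 0 := by rw [hc4]; exact inv_ne_zero two
          have h5 : (2:k)⁻¹ = b.repr x 5 :=
            mul_left_cancel₀ hne (E54.trans (mul_comm _ _))
          have h6 : (2:k)⁻¹ = b.repr x 6 := mul_left_cancel₀ hne E46
          have : (1:k)/2 = 0 := by
            linear_combination (-1:k) * E56 - (2:k)⁻¹ * hc4 + (b.repr x 6) * h5 + (2:k)⁻¹ * h6
          norm_num at this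
      have h5' : b.repr x 5 = 0 := by
        rw [h4, zero_mul] at E45
        exact (mul_eq_zero.mp E45).resolve_right (inv_ne_zero two)
      have h6' : b.repr x 6 = 0 := by
        rw [h4, mul_zero] at E64
        exact (mul_eq_zero.mp E64).resolve_right (inv_ne_zero two)
      have h7' : b.repr x 7 = 0 := by
        rw [h5', mul_zero] at E75
        exact (mul_eq_zero.mp E75).resolve_right (inv_ne_zero two)
      have hsum : b.repr x 0 + b.repr x 1 + b.repr x 2 + b.repr x 3 + b.repr x 4
          + b.repr x 5 + b.repr x 6 + b.repr x 7 = 1 := by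
        conv_rhs => rw [← hcou]
        conv_rhs => rw [← hx]
        rw [map_sum, Fin.sum_univ_eight]
        simp only [LinearMap.map_smul, smul_eq_mul, b0, b1, b2, b3, b4, b5, b6, b7,
          Bialgebra.counit_one, hεg, hεh, hε3, hεz, hε5, hε6, hε7, mul_one]
      have sel : ∀ i : Fin 8, b.repr x i = b.repr x i * b.repr x i →
          b.repr x i = 0 ∨ b.repr x i = 1 := by
        intro i hi
        rcases mul_eq_zero.mp (show b.repr x i * (b.repr x i - 1) = 0 by
          linear_combination -hi) with hh | hh
        · exact Or.inl hh
        · right; linear_combination hh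
      rw [Fin.sum_univ_eight] at hx
      rcases sel 0 E00 with h0 | h0 <;> rcases sel 1 E11 with h1 | h1 <;>
        rcases sel 2 E22 with h2' | h2' <;> rcases sel 3 E33 with h3 | h3 <;>
        rw [h0, h1, h2', h3, h4, h5', h6', h7'] at hsum hx <;>
        simp only [zero_smul, one_smul, add_zero, zero_add] at hsum hx <;>
        first
          | (refine Or.inl ?_; rw [← hx, b0]; done)
          | (refine Or.inr (Or.inl ?_); rw [← hx, b1]; done)
          | (refine Or.inr (Or.inr (Or.inl ?_)); rw [← hx, b2]; done)
          | (refine Or.inr (Or.inr (Or.inr ?_)); rw [← hx, b3]; done)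
          | (exfalso; norm_num at hsum)
    · rintro (rfl | rfl | rfl | rfl)
      · exact ⟨by rw [Bialgebra.comul_one, Algebra.TensorProduct.one_def], Bialgebra.counit_one⟩
      · exact ⟨hΔg, hεg⟩
      · exact ⟨hΔh, hεh⟩
      · exact ⟨hΔ3, hε3⟩
  have bi : Function.Injective b := b.injective
  have ne1g : (1:H) ≠ g := fun e =>
    absurd (bi (show b 0 = b 1 by rw [b0, b1]; exact e)) (by decide)
  have ne1h : (1:H) ≠ h := fun e =>
    absurd (bi (show b 0 = b 2 by rw [b0, b2]; exact e)) (by decide)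
  have ne1gh : (1:H) ≠ g * h := fun e =>
    absurd (bi (show b 0 = b 3 by rw [b0, b3]; exact e)) (by decide)
  have negh : g ≠ h := fun e =>
    absurd (bi (show b 1 = b 2 by rw [b1, b2]; exact e)) (by decide)
  have neggh : g ≠ g * h := fun e =>
    absurd (bi (show b 1 = b 3 by rw [b1, b3]; exact e)) (by decide)
  have nehgh : h ≠ g * h := fun e =>
    absurd (bi (show b 2 = b 3 by rw [b2, b3]; exact e)) (by decide)
  have e2 : ∀ a : ZMod 2, a = 0 ∨ a = 1 := by decide
  refine ⟨part1, kpF g h, ?_, ?_, ?_, ?_⟩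
  · rintro ⟨u1, u2⟩ ⟨v1, v2⟩ huv
    rcases e2 u1 with rfl | rfl <;> rcases e2 u2 with rfl | rfl <;>
      rcases e2 v1 with rfl | rfl <;> rcases e2 v2 with rfl | rfl <;>
      simp only [kpF00, kpF10, kpF01, kpF11] at huv <;>
      first
        | rfl
        | exact absurd huv ne1g | exact absurd huv.symm ne1g
        | exact absurd huv ne1h | exact absurd huv.symm ne1h
        | exact absurd huv ne1gh | exact absurd huv.symm ne1gh
        | exact absurd huv negh | exact absurd huv.symm negh
        | exact absurd huv neggh | exact absurd huv.symm neggh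
        | exact absurd huv nehgh | exact absurd huv.symm nehgh
  · intro x
    rw [part1 x]
    constructor
    · rintro (e | e | e | e)
      · exact ⟨(0, 0), (kpF00 g h).trans e.symm⟩
      · exact ⟨(1, 0), (kpF10 g h).trans e.symm⟩
      · exact ⟨(0, 1), (kpF01 g h).trans e.symm⟩
      · exact ⟨(1, 1), (kpF11 g h).trans e.symm⟩
    · rintro ⟨⟨u1, u2⟩, rfl⟩
      rcases e2 u1 with rfl | rfl <;> rcases e2 u2 with rfl | rfl
      · exact Or.inl (kpF00 g h)
      · exact Or.inr (Or.inr (Or.inl (kpF01 g h)))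
      · exact Or.inr (Or.inl (kpF10 g h))
      · exact Or.inr (Or.inr (Or.inr (kpF11 g h)))
  · exact kpF00 g h
  · rintro ⟨u1, u2⟩ ⟨v1, v2⟩
    have zz : (1 : ZMod 2) + 1 = 0 := by decide
    have A8 : h * (g * h) = g := by rw [← mul_assoc, ← hgh, mul_assoc, hh2, mul_one]
    have A12 : g * (g * h) = h := by rw [← mul_assoc, hg2, one_mul]
    have A14 : g * h * h = g := by rw [mul_assoc, hh2, mul_one]
    have A16 : g * h * (g * h) = 1 := by rw [mul_assoc g h (g * h), A8, hg2]
    rcases e2 u1 with rfl | rfl <;> rcases e2 u2 with rfl | rfl <;>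
      rcases e2 v1 with rfl | rfl <;> rcases e2 v2 with rfl | rfl <;>
      simp only [Prod.mk_add_mk, add_zero, zero_add, zz, kpF00, kpF10, kpF01, kpF11,
        one_mul, mul_one] <;>
      first
        | rfl
        | exact hg2.symm
        | exact hh2.symm
        | exact hgh
        | exact A8.symm
        | exact A12.symm
        | exact A14.symm
        | exact mghg.symm
        | exact A16.symm
end

section
/- For every matched pair of actions (⇀, ↼) on the Kac–Paljutkin algebra H_8, each of the elements z ⇀ g, z ⇀ h, z ⇀ gh is a group-like element different from 1 (hence lies in {g, h, gh}), and likewise each of g ↼ z, h ↼ z, gh ↼ z lies in {g, h, gh}. -/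
open TensorProduct

noncomputable section

section KPAux

open TensorProduct

namespace KPAux

variable {k H : Type} [Field k] [CharZero k] [Ring H] [HopfAlgebra k H]
variable {g h z : H} {b : Module.Basis (Fin 8) k H}

/-- Coordinate functional on the second tensor factor. -/
def rowCoord (b : Module.Basis (Fin 8) k H) (j : Fin 8) : H ⊗[k] H →ₗ[k] H :=
  (TensorProduct.rid k H).toLinearMap ∘ₗ TensorProduct.map LinearMap.id (b.coord j)

/-- Coordinate functional on the first tensor factor. -/
def colCoord (b : Module.Basis (Fin 8) k H) (i : Fin 8) : H ⊗[k] H →ₗ[k] H :=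
  (TensorProduct.lid k H).toLinearMap ∘ₗ TensorProduct.map (b.coord i) LinearMap.id

/-- Coordinate functional on both tensor factors. -/
def pairCoord (b : Module.Basis (Fin 8) k H) (i j : Fin 8) : H ⊗[k] H →ₗ[k] k :=
  (TensorProduct.lid k k).toLinearMap ∘ₗ TensorProduct.map (b.coord i) (b.coord j)

@[simp] lemma rowCoord_tmul (j : Fin 8) (x y : H) :
    rowCoord b j (x ⊗ₜ[k] y) = b.repr y j • x := by
  simp [rowCoord, Module.Basis.coord_apply]

@[simp] lemma colCoord_tmul (i : Fin 8) (x y : H) :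
    colCoord b i (x ⊗ₜ[k] y) = b.repr x i • y := by
  simp [colCoord, Module.Basis.coord_apply]

@[simp] lemma pairCoord_tmul (i j : Fin 8) (x y : H) :
    pairCoord b i j (x ⊗ₜ[k] y) = b.repr x i * b.repr y j := by
  simp [pairCoord, Module.Basis.coord_apply, smul_eq_mul]

variable {lact ract : H ⊗[k] H →ₗ[k] H}

lemma hb0 (hKP : IsKacPaljutkin k H g h z b) : b 0 = 1 := by have := congrFun hKP.basis_eq 0; simpa using this
lemma hb1 (hKP : IsKacPaljutkin k H g h z b) : b 1 = g := by have := congrFun hKP.basis_eq 1; simpa using this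
lemma hb2 (hKP : IsKacPaljutkin k H g h z b) : b 2 = h := by have := congrFun hKP.basis_eq 2; simpa using this
lemma hb3 (hKP : IsKacPaljutkin k H g h z b) : b 3 = g * h := by have := congrFun hKP.basis_eq 3; simpa using this
lemma hb4 (hKP : IsKacPaljutkin k H g h z b) : b 4 = z := by have := congrFun hKP.basis_eq 4; simpa using this
lemma hb5 (hKP : IsKacPaljutkin k H g h z b) : b 5 = g * z := by have := congrFun hKP.basis_eq 5; simpa using this
lemma hb6 (hKP : IsKacPaljutkin k H g h z b) : b 6 = h * z := by have := congrFun hKP.basis_eq 6; simpa using this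
lemma hb7 (hKP : IsKacPaljutkin k H g h z b) : b 7 = g * h * z := by have := congrFun hKP.basis_eq 7; simpa using this

lemma Pghg (hKP : IsKacPaljutkin k H g h z b) : g * h * g = h := by
  rw [mul_assoc, ← hKP.gh_comm, ← mul_assoc, hKP.g_sq, one_mul]
lemma Pghh (hKP : IsKacPaljutkin k H g h z b) : g * h * h = g := by rw [mul_assoc, hKP.h_sq, mul_one]
lemma Pggz (hKP : IsKacPaljutkin k H g h z b) : g * (g * z) = z := by rw [← mul_assoc, hKP.g_sq, one_mul]
lemma Pghz (hKP : IsKacPaljutkin k H g h z b) : g * (h * z) = g * h * z := (mul_assoc g h z).symm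
lemma Phgz (hKP : IsKacPaljutkin k H g h z b) : h * (g * z) = g * h * z := by rw [← mul_assoc, ← hKP.gh_comm]
lemma Phhz (hKP : IsKacPaljutkin k H g h z b) : h * (h * z) = z := by rw [← mul_assoc, hKP.h_sq, one_mul]
lemma Pghgz (hKP : IsKacPaljutkin k H g h z b) : g * h * (g * z) = h * z := by rw [← mul_assoc, Pghg hKP]
lemma Pghhz (hKP : IsKacPaljutkin k H g h z b) : g * h * (h * z) = g * z := by rw [← mul_assoc, Pghh hKP]
lemma Pghgh (hKP : IsKacPaljutkin k H g h z b) : g * h * (g * h) = 1 := by rw [← mul_assoc, Pghg hKP, hKP.h_sq]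
lemma Pz4 (hKP : IsKacPaljutkin k H g h z b) : z * z * (z * z) = 1 := by
  have hA : (1 + g + h - g * h) * (1 + g + h - g * h) = (4 : k) • (1 : H) := by
    have h4 : ((4 : k) • (1 : H)) = 1 + 1 + 1 + 1 := by
      rw [show ((4:k)) = ((1:k)+1+1+1) by norm_num]
      simp [add_smul]
    rw [h4]
    simp only [mul_add, mul_sub, add_mul, sub_mul, mul_one, one_mul, hKP.g_sq, hKP.h_sq,
      ← hKP.gh_comm, Pghg hKP, Pghh hKP, Pghgh hKP,
      show g * (g * h) = h by rw [← mul_assoc, hKP.g_sq, one_mul],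
      show h * (g * h) = g by rw [← mul_assoc, ← hKP.gh_comm, mul_assoc, hKP.h_sq, mul_one]]
    abel
  rw [hKP.z_sq, smul_mul_assoc, mul_smul_comm, smul_smul, hA, smul_smul]
  norm_num

lemma hC3 (hKP : IsKacPaljutkin k H g h z b) : Coalgebra.comul (R := k) (g * h) = (g * h) ⊗ₜ[k] (g * h) := by
  rw [Bialgebra.comul_mul, hKP.comul_g, hKP.comul_h, Algebra.TensorProduct.tmul_mul_tmul]

lemma hC5 (hKP : IsKacPaljutkin k H g h z b) : Coalgebra.comul (R := k) (g * z)
    = (2:k)⁻¹ • ((g*z) ⊗ₜ[k] (g*z) + z ⊗ₜ[k] (g*z) + (g*z) ⊗ₜ[k] (g*h*z) - z ⊗ₜ[k] (g*h*z)) := by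
  rw [Bialgebra.comul_mul, hKP.comul_g, hKP.comul_z, mul_smul_comm]
  simp only [mul_add, mul_sub, Algebra.TensorProduct.tmul_mul_tmul, Pggz hKP, Pghz hKP]

lemma hC6 (hKP : IsKacPaljutkin k H g h z b) : Coalgebra.comul (R := k) (h * z)
    = (2:k)⁻¹ • ((h*z) ⊗ₜ[k] (h*z) + (g*h*z) ⊗ₜ[k] (h*z) + (h*z) ⊗ₜ[k] z - (g*h*z) ⊗ₜ[k] z) := by
  rw [Bialgebra.comul_mul, hKP.comul_h, hKP.comul_z, mul_smul_comm]
  simp only [mul_add, mul_sub, Algebra.TensorProduct.tmul_mul_tmul, Phgz hKP, Phhz hKP]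

lemma hC7 (hKP : IsKacPaljutkin k H g h z b) : Coalgebra.comul (R := k) (g * h * z)
    = (2:k)⁻¹ • ((g*h*z) ⊗ₜ[k] (g*h*z) + (h*z) ⊗ₜ[k] (g*h*z) + (g*h*z) ⊗ₜ[k] (g*z)
        - (h*z) ⊗ₜ[k] (g*z)) := by
  rw [show g * h * z = (g*h) * z from rfl, Bialgebra.comul_mul, hC3 hKP, hKP.comul_z, mul_smul_comm]
  simp only [mul_add, mul_sub, Algebra.TensorProduct.tmul_mul_tmul, Pghgz hKP, Pghhz hKP]

lemma hE3 (hKP : IsKacPaljutkin k H g h z b) : Coalgebra.counit (R := k) (g * h) = 1 := by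
  rw [Bialgebra.counit_mul, hKP.counit_g, hKP.counit_h, mul_one]
lemma hE5 (hKP : IsKacPaljutkin k H g h z b) : Coalgebra.counit (R := k) (g * z) = 1 := by
  rw [Bialgebra.counit_mul, hKP.counit_g, hKP.counit_z, mul_one]
lemma hE6 (hKP : IsKacPaljutkin k H g h z b) : Coalgebra.counit (R := k) (h * z) = 1 := by
  rw [Bialgebra.counit_mul, hKP.counit_h, hKP.counit_z, mul_one]
lemma hE7 (hKP : IsKacPaljutkin k H g h z b) : Coalgebra.counit (R := k) (g * h * z) = 1 := by
  rw [show g * h * z = (g*h) * z from rfl, Bialgebra.counit_mul, hE3 hKP, hKP.counit_z, mul_one]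
lemma hEzz (hKP : IsKacPaljutkin k H g h z b) : Coalgebra.counit (R := k) (z * z) = 1 := by
  rw [Bialgebra.counit_mul, hKP.counit_z, mul_one]

@[simp] lemma pairCoord_basis (i j a a' : Fin 8) :
    pairCoord b i j (b a ⊗ₜ[k] b a') = (if a = i then (1:k) else 0) * (if a' = j then 1 else 0) := by
  simp [pairCoord_tmul, Module.Basis.repr_self, Finsupp.single_apply]
lemma crepr_z (hKP : IsKacPaljutkin k H g h z b) : b.repr z = Finsupp.single 4 1 := by
  have := b.repr_self 4; rwa [hb4 hKP] at this
lemma crepr_gz (hKP : IsKacPaljutkin k H g h z b) : b.repr (g * z) = Finsupp.single 5 1 := by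
  have := b.repr_self 5; rwa [hb5 hKP] at this
lemma crepr_hz (hKP : IsKacPaljutkin k H g h z b) : b.repr (h * z) = Finsupp.single 6 1 := by
  have := b.repr_self 6; rwa [hb6 hKP] at this

set_option maxHeartbeats 2000000 in
lemma grouplike_mem (hKP : IsKacPaljutkin k H g h z b) (u : H)
    (hD : Coalgebra.comul (R := k) u = u ⊗ₜ[k] u)
    (hE : Coalgebra.counit (R := k) u = (1 : k)) :
    u ∈ ({1, g, h, g * h} : Set H) := by
  have hu : u = b.repr u 0 • b 0 + b.repr u 1 • b 1 + b.repr u 2 • b 2 + b.repr u 3 • b 3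
      + b.repr u 4 • b 4 + b.repr u 5 • b 5 + b.repr u 6 • b 6 + b.repr u 7 • b 7 := by
    have := b.sum_repr u
    rw [Fin.sum_univ_eight] at this
    exact this.symm
  have c0 : Coalgebra.comul (R := k) (b 0) = b 0 ⊗ₜ[k] b 0 := by
    rw [hb0 hKP, Bialgebra.comul_one, Algebra.TensorProduct.one_def]
  have c1 : Coalgebra.comul (R := k) (b 1) = b 1 ⊗ₜ[k] b 1 := by rw [hb1 hKP]; exact hKP.comul_g
  have c2 : Coalgebra.comul (R := k) (b 2) = b 2 ⊗ₜ[k] b 2 := by rw [hb2 hKP]; exact hKP.comul_h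
  have c3 : Coalgebra.comul (R := k) (b 3) = b 3 ⊗ₜ[k] b 3 := by rw [hb3 hKP]; exact hC3 hKP
  have c4 : Coalgebra.comul (R := k) (b 4)
      = (2:k)⁻¹ • (b 4 ⊗ₜ[k] b 4 + b 5 ⊗ₜ[k] b 4 + b 4 ⊗ₜ[k] b 6 - b 5 ⊗ₜ[k] b 6) := by
    rw [hb4 hKP, hb5 hKP, hb6 hKP]; exact hKP.comul_z
  have c5 : Coalgebra.comul (R := k) (b 5)
      = (2:k)⁻¹ • (b 5 ⊗ₜ[k] b 5 + b 4 ⊗ₜ[k] b 5 + b 5 ⊗ₜ[k] b 7 - b 4 ⊗ₜ[k] b 7) := by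
    rw [hb4 hKP, hb5 hKP, hb7 hKP]; exact hC5 hKP
  have c6 : Coalgebra.comul (R := k) (b 6)
      = (2:k)⁻¹ • (b 6 ⊗ₜ[k] b 6 + b 7 ⊗ₜ[k] b 6 + b 6 ⊗ₜ[k] b 4 - b 7 ⊗ₜ[k] b 4) := by
    rw [hb4 hKP, hb6 hKP, hb7 hKP]; exact hC6 hKP
  have c7 : Coalgebra.comul (R := k) (b 7)
      = (2:k)⁻¹ • (b 7 ⊗ₜ[k] b 7 + b 6 ⊗ₜ[k] b 7 + b 7 ⊗ₜ[k] b 5 - b 6 ⊗ₜ[k] b 5) := by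
    rw [hb5 hKP, hb6 hKP, hb7 hKP]; exact hC7 hKP
  have hX : (u ⊗ₜ[k] u : H ⊗[k] H)
      = b.repr u 0 • (b 0 ⊗ₜ[k] b 0) + b.repr u 1 • (b 1 ⊗ₜ[k] b 1)
      + b.repr u 2 • (b 2 ⊗ₜ[k] b 2) + b.repr u 3 • (b 3 ⊗ₜ[k] b 3)
      + ((2:k)⁻¹ * b.repr u 4) • (b 4 ⊗ₜ[k] b 4) + ((2:k)⁻¹ * b.repr u 4) • (b 5 ⊗ₜ[k] b 4)
      + ((2:k)⁻¹ * b.repr u 4) • (b 4 ⊗ₜ[k] b 6) - ((2:k)⁻¹ * b.repr u 4) • (b 5 ⊗ₜ[k] b 6)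
      + ((2:k)⁻¹ * b.repr u 5) • (b 5 ⊗ₜ[k] b 5) + ((2:k)⁻¹ * b.repr u 5) • (b 4 ⊗ₜ[k] b 5)
      + ((2:k)⁻¹ * b.repr u 5) • (b 5 ⊗ₜ[k] b 7) - ((2:k)⁻¹ * b.repr u 5) • (b 4 ⊗ₜ[k] b 7)
      + ((2:k)⁻¹ * b.repr u 6) • (b 6 ⊗ₜ[k] b 6) + ((2:k)⁻¹ * b.repr u 6) • (b 7 ⊗ₜ[k] b 6)
      + ((2:k)⁻¹ * b.repr u 6) • (b 6 ⊗ₜ[k] b 4) - ((2:k)⁻¹ * b.repr u 6) • (b 7 ⊗ₜ[k] b 4)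
      + ((2:k)⁻¹ * b.repr u 7) • (b 7 ⊗ₜ[k] b 7) + ((2:k)⁻¹ * b.repr u 7) • (b 6 ⊗ₜ[k] b 7)
      + ((2:k)⁻¹ * b.repr u 7) • (b 7 ⊗ₜ[k] b 5) - ((2:k)⁻¹ * b.repr u 7) • (b 6 ⊗ₜ[k] b 5) := by
    rw [← hD]
    conv_lhs => rw [hu]
    simp only [map_add, map_smul, c0, c1, c2, c3, c4, c5, c6, c7]
    module
  have key : ∀ i j : Fin 8, b.repr u i * b.repr u j
      = pairCoord b i j (b.repr u 0 • (b 0 ⊗ₜ[k] b 0) + b.repr u 1 • (b 1 ⊗ₜ[k] b 1)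
      + b.repr u 2 • (b 2 ⊗ₜ[k] b 2) + b.repr u 3 • (b 3 ⊗ₜ[k] b 3)
      + ((2:k)⁻¹ * b.repr u 4) • (b 4 ⊗ₜ[k] b 4) + ((2:k)⁻¹ * b.repr u 4) • (b 5 ⊗ₜ[k] b 4)
      + ((2:k)⁻¹ * b.repr u 4) • (b 4 ⊗ₜ[k] b 6) - ((2:k)⁻¹ * b.repr u 4) • (b 5 ⊗ₜ[k] b 6)
      + ((2:k)⁻¹ * b.repr u 5) • (b 5 ⊗ₜ[k] b 5) + ((2:k)⁻¹ * b.repr u 5) • (b 4 ⊗ₜ[k] b 5)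
      + ((2:k)⁻¹ * b.repr u 5) • (b 5 ⊗ₜ[k] b 7) - ((2:k)⁻¹ * b.repr u 5) • (b 4 ⊗ₜ[k] b 7)
      + ((2:k)⁻¹ * b.repr u 6) • (b 6 ⊗ₜ[k] b 6) + ((2:k)⁻¹ * b.repr u 6) • (b 7 ⊗ₜ[k] b 6)
      + ((2:k)⁻¹ * b.repr u 6) • (b 6 ⊗ₜ[k] b 4) - ((2:k)⁻¹ * b.repr u 6) • (b 7 ⊗ₜ[k] b 4)
      + ((2:k)⁻¹ * b.repr u 7) • (b 7 ⊗ₜ[k] b 7) + ((2:k)⁻¹ * b.repr u 7) • (b 6 ⊗ₜ[k] b 7)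
      + ((2:k)⁻¹ * b.repr u 7) • (b 7 ⊗ₜ[k] b 5) - ((2:k)⁻¹ * b.repr u 7) • (b 6 ⊗ₜ[k] b 5)) := by
    intro i j
    conv_lhs => rw [show b.repr u i * b.repr u j = pairCoord b i j (u ⊗ₜ[k] u) by
      simp [pairCoord_tmul]]
    rw [hX]
  have E44 := key 4 4; have E45 := key 4 5; have E54 := key 5 4
  have E46 := key 4 6; have E56 := key 5 6; have E64 := key 6 4; have E67 := key 6 7
  have E00 := key 0 0; have E11 := key 1 1; have E22 := key 2 2; have E33 := key 3 3
  have E01 := key 0 1; have E02 := key 0 2; have E03 := key 0 3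
  have E12 := key 1 2; have E13 := key 1 3; have E23 := key 2 3
  simp only [map_add, map_sub, map_smul, pairCoord_basis, smul_eq_mul, Fin.reduceEq,
    reduceIte, one_mul, mul_one, mul_zero, zero_mul, add_zero, zero_add, sub_zero,
    zero_sub] at E44 E45 E54 E46 E56 E64 E67 E00 E11 E22 E33 E01 E02 E03 E12 E13 E23
  have hc45 : b.repr u 4 = b.repr u 5 := by linear_combination (2:k) * E45 - 2 * E54
  have hc4 : b.repr u 4 = 0 := by
    by_contra hne
    have h4v : b.repr u 4 = (2:k)⁻¹ := by
      have : b.repr u 4 * b.repr u 4 = (2:k)⁻¹ * b.repr u 4 := by linear_combination E44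
      exact mul_right_cancel₀ hne this
    have h6v : b.repr u 6 = (2:k)⁻¹ := by
      have : b.repr u 4 * b.repr u 6 = (2:k)⁻¹ * b.repr u 4 := by linear_combination E46
      rw [h4v] at this
      linear_combination (2:k) * this
    have : b.repr u 5 * b.repr u 6 = -((2:k)⁻¹ * b.repr u 4) := by linear_combination E56
    rw [← hc45, h4v, h6v] at this
    norm_num at this
  have hc5 : b.repr u 5 = 0 := by rw [← hc45]; exact hc4
  have hc6 : b.repr u 6 = 0 := by
    have : b.repr u 6 * b.repr u 4 = (2:k)⁻¹ * b.repr u 6 := by linear_combination E64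
    rw [hc4] at this
    linear_combination (-2:k) * this
  have hc7 : b.repr u 7 = 0 := by
    have : b.repr u 6 * b.repr u 7 = (2:k)⁻¹ * b.repr u 7 := by linear_combination E67
    rw [hc6] at this
    linear_combination (-2:k) * this
  have d0 : Coalgebra.counit (R := k) (b 0) = 1 := by rw [hb0 hKP]; exact Bialgebra.counit_one
  have d1 : Coalgebra.counit (R := k) (b 1) = 1 := by rw [hb1 hKP]; exact hKP.counit_g
  have d2 : Coalgebra.counit (R := k) (b 2) = 1 := by rw [hb2 hKP]; exact hKP.counit_h
  have d3 : Coalgebra.counit (R := k) (b 3) = 1 := by rw [hb3 hKP]; exact hE3 hKP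
  have d4 : Coalgebra.counit (R := k) (b 4) = 1 := by rw [hb4 hKP]; exact hKP.counit_z
  have d5 : Coalgebra.counit (R := k) (b 5) = 1 := by rw [hb5 hKP]; exact hE5 hKP
  have d6 : Coalgebra.counit (R := k) (b 6) = 1 := by rw [hb6 hKP]; exact hE6 hKP
  have d7 : Coalgebra.counit (R := k) (b 7) = 1 := by rw [hb7 hKP]; exact hE7 hKP
  have ce : b.repr u 0 + b.repr u 1 + b.repr u 2 + b.repr u 3 = 1 := by
    have t := congrArg (Coalgebra.counit (R := k)) hu
    rw [hE] at t
    simp only [map_add, map_smul, smul_eq_mul, d0, d1, d2, d3, d4, d5, d6, d7, mul_one] at t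
    rw [hc4, hc5, hc6, hc7] at t
    linear_combination -t
  have idem : ∀ i : Fin 8, b.repr u i * b.repr u i = b.repr u i →
      b.repr u i = 0 ∨ b.repr u i = 1 := by
    intro i hi
    rcases mul_eq_zero.mp (show b.repr u i * (b.repr u i - 1) = 0 by linear_combination hi) with
      hh | hh
    · exact Or.inl hh
    · exact Or.inr (sub_eq_zero.mp hh)
  have i0 := idem 0 (by linear_combination E00)
  have i1 := idem 1 (by linear_combination E11)
  have i2 := idem 2 (by linear_combination E22)
  have i3 := idem 3 (by linear_combination E33)
  have p01 : b.repr u 0 * b.repr u 1 = 0 := by linear_combination E01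
  have p02 : b.repr u 0 * b.repr u 2 = 0 := by linear_combination E02
  have p03 : b.repr u 0 * b.repr u 3 = 0 := by linear_combination E03
  have p12 : b.repr u 1 * b.repr u 2 = 0 := by linear_combination E12
  have p13 : b.repr u 1 * b.repr u 3 = 0 := by linear_combination E13
  have p23 : b.repr u 2 * b.repr u 3 = 0 := by linear_combination E23
  rcases i0 with h0 | h0
  · rcases i1 with h1 | h1
    · rcases i2 with h2 | h2
      · have h3 : b.repr u 3 = 1 := by rw [h0, h1, h2] at ce; linear_combination ce
        have hub : u = b 3 := by rw [hu, h0, h1, h2, h3, hc4, hc5, hc6, hc7]; simp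
        rw [hub, hb3 hKP]; simp
      · have h3 : b.repr u 3 = 0 := by rw [h2] at p23; linear_combination p23
        have hub : u = b 2 := by rw [hu, h0, h1, h2, h3, hc4, hc5, hc6, hc7]; simp
        rw [hub, hb2 hKP]; simp
    · have h2 : b.repr u 2 = 0 := by rw [h1] at p12; linear_combination p12
      have h3 : b.repr u 3 = 0 := by rw [h1] at p13; linear_combination p13
      have hub : u = b 1 := by rw [hu, h0, h1, h2, h3, hc4, hc5, hc6, hc7]; simp
      rw [hub, hb1 hKP]; simp
  · have h1 : b.repr u 1 = 0 := by rw [h0] at p01; linear_combination p01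
    have h2 : b.repr u 2 = 0 := by rw [h0] at p02; linear_combination p02
    have h3 : b.repr u 3 = 0 := by rw [h0] at p03; linear_combination p03
    have hub : u = b 0 := by rw [hu, h0, h1, h2, h3, hc4, hc5, hc6, hc7]; simp
    rw [hub, hb0 hKP]; simp

set_option maxHeartbeats 2000000 in
lemma left_act (hKP : IsKacPaljutkin k H g h z b)
    (lact ract : H ⊗[k] H →ₗ[k] H) (hmp : IsMatchedPairOfActions lact ract)
    (γ : H) (hγ2 : γ * γ = 1) (hγ1 : γ ≠ (1 : H))
    (hcγ : Coalgebra.comul (R := k) γ = γ ⊗ₜ[k] γ)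
    (hεγ : Coalgebra.counit (R := k) γ = (1 : k)) :
    Coalgebra.comul (R := k) (lact (z ⊗ₜ[k] γ)) = lact (z ⊗ₜ[k] γ) ⊗ₜ[k] lact (z ⊗ₜ[k] γ) ∧
    Coalgebra.counit (R := k) (lact (z ⊗ₜ[k] γ)) = 1 ∧
    lact (z ⊗ₜ[k] γ) ≠ 1 ∧
    lact (z ⊗ₜ[k] γ) ∈ ({g, h, g * h} : Set H) := by
  -- Sweedler expansion of `z ⊗ γ`
  have hsw : sweedler2 k H (z ⊗ₜ[k] γ)
      = (2:k)⁻¹ • ((z ⊗ₜ[k] γ) ⊗ₜ[k] (z ⊗ₜ[k] γ) + ((g*z) ⊗ₜ[k] γ) ⊗ₜ[k] (z ⊗ₜ[k] γ)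
        + (z ⊗ₜ[k] γ) ⊗ₜ[k] ((h*z) ⊗ₜ[k] γ) - ((g*z) ⊗ₜ[k] γ) ⊗ₜ[k] ((h*z) ⊗ₜ[k] γ)) := by
    simp only [sweedler2, LinearMap.coe_comp, Function.comp_apply, LinearEquiv.coe_coe,
      TensorProduct.map_tmul, hKP.comul_z, hcγ, ← TensorProduct.smul_tmul',
      TensorProduct.add_tmul, TensorProduct.sub_tmul, map_smul, map_add, map_sub,
      TensorProduct.tensorTensorTensorComm_tmul]
  -- the right action by `γ` is involutive
  have hRR : ∀ y : H, ract (ract (y ⊗ₜ[k] γ) ⊗ₜ[k] γ) = y := by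
    intro y
    have t := LinearMap.congr_fun hmp.right.act_mul ((y ⊗ₜ[k] γ) ⊗ₜ[k] γ)
    simp only [LinearMap.coe_comp, Function.comp_apply, TensorProduct.map_tmul,
      LinearMap.id_coe, id_eq, LinearEquiv.coe_coe, TensorProduct.assoc_tmul,
      LinearMap.mul'_apply, hγ2, hmp.right.act_one] at t
    exact t
  -- matched pair condition mp5 at `z ⊗ γ`
  have h5 := LinearMap.congr_fun hmp.mp5 (z ⊗ₜ[k] γ)
  simp only [LinearMap.coe_comp, Function.comp_apply, hsw, map_smul, map_add, map_sub,
    TensorProduct.map_tmul, LinearEquiv.coe_coe, TensorProduct.comm_tmul] at h5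
  have h5' := congrArg (fun t => (2:k) • t) h5
  simp only [smul_smul] at h5'
  norm_num at h5'
  -- push the second legs back through the (involutive) right action by γ
  set Rg : H →ₗ[k] H := ract ∘ₗ (TensorProduct.mk k H H).flip γ with hRgdef
  have hRg : ∀ y : H, Rg y = ract (y ⊗ₜ[k] γ) := by
    intro y; simp [hRgdef, TensorProduct.mk_apply]
  have happ := congrArg (TensorProduct.map (LinearMap.id : H →ₗ[k] H) Rg) h5'
  simp only [map_add, map_sub, TensorProduct.map_tmul, LinearMap.id_coe, id_eq, hRg,
    hRR] at happ
  -- extract coordinates in the second leg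
  have hv : lact ((g*z) ⊗ₜ[k] γ) = lact (z ⊗ₜ[k] γ) := by
    have t := congrArg (rowCoord b 6) happ
    simp only [map_add, map_sub, rowCoord_tmul, crepr_z hKP, crepr_gz hKP, crepr_hz hKP,
      Finsupp.single_apply, Fin.reduceEq, reduceIte, one_smul, zero_smul, add_zero,
      zero_add, sub_zero, zero_sub, sub_eq_zero] at t
    first
    | exact t.symm
    | exact (sub_eq_zero.mp t.symm).symm
    | exact sub_eq_zero.mp t
  have hw : lact ((h*z) ⊗ₜ[k] γ) = lact (z ⊗ₜ[k] γ) := by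
    have t := congrArg (rowCoord b 5) happ
    simp only [map_add, map_sub, rowCoord_tmul, crepr_z hKP, crepr_gz hKP, crepr_hz hKP,
      Finsupp.single_apply, Fin.reduceEq, reduceIte, one_smul, zero_smul, add_zero,
      zero_add, sub_zero, zero_sub, sub_eq_zero] at t
    first
    | exact t.symm
    | exact (sub_eq_zero.mp t.symm).symm
    | exact sub_eq_zero.mp t
  -- group-likeness
  have hgl : Coalgebra.comul (R := k) (lact (z ⊗ₜ[k] γ))
      = lact (z ⊗ₜ[k] γ) ⊗ₜ[k] lact (z ⊗ₜ[k] γ) := by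
    have t := LinearMap.congr_fun hmp.left.comul_comp (z ⊗ₜ[k] γ)
    simp only [LinearMap.coe_comp, Function.comp_apply, hsw, map_smul, map_add, map_sub,
      TensorProduct.map_tmul] at t
    rw [hv, hw] at t
    rw [t]
    module
  have hεu : Coalgebra.counit (R := k) (lact (z ⊗ₜ[k] γ)) = 1 := by
    have t := LinearMap.congr_fun hmp.left.counit_comp (z ⊗ₜ[k] γ)
    simp only [LinearMap.coe_comp, Function.comp_apply, TensorProduct.map_tmul,
      LinearEquiv.coe_coe, TensorProduct.lid_tmul, hKP.counit_z, hεγ, smul_eq_mul,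
      mul_one] at t
    exact t
  -- lact (z ⊗ γ) ≠ 1
  have hact2 : ∀ a y : H, lact (a ⊗ₜ[k] lact (a ⊗ₜ[k] y)) = lact ((a*a) ⊗ₜ[k] y) := by
    intro a y
    have t := LinearMap.congr_fun hmp.left.mul_act ((a ⊗ₜ[k] a) ⊗ₜ[k] y)
    simp only [LinearMap.coe_comp, Function.comp_apply, LinearEquiv.coe_coe,
      TensorProduct.assoc_tmul, TensorProduct.map_tmul, LinearMap.id_coe, id_eq,
      LinearMap.mul'_apply] at t
    exact t
  have hne : lact (z ⊗ₜ[k] γ) ≠ 1 := by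
    intro h1
    have s1 : lact ((z*z) ⊗ₜ[k] γ) = 1 := by
      rw [← hact2 z γ, h1, hmp.mp2, hKP.counit_z, one_smul]
    have s2 : lact ((z*z) ⊗ₜ[k] lact ((z*z) ⊗ₜ[k] γ)) = γ := by
      rw [hact2 (z*z) γ, Pz4 hKP, hmp.left.one_act]
    rw [s1, hmp.mp2, hEzz hKP, one_smul] at s2
    exact hγ1 s2.symm
  refine ⟨hgl, hεu, hne, ?_⟩
  have hmem := grouplike_mem hKP (lact (z ⊗ₜ[k] γ)) hgl hεu
  rcases hmem with h1 | hmem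
  · exact absurd h1 hne
  · exact hmem

set_option maxHeartbeats 2000000 in
lemma right_act (hKP : IsKacPaljutkin k H g h z b)
    (lact ract : H ⊗[k] H →ₗ[k] H) (hmp : IsMatchedPairOfActions lact ract)
    (γ : H) (hγ2 : γ * γ = 1) (hγ1 : γ ≠ (1 : H))
    (hcγ : Coalgebra.comul (R := k) γ = γ ⊗ₜ[k] γ)
    (hεγ : Coalgebra.counit (R := k) γ = (1 : k)) :
    ract (γ ⊗ₜ[k] z) ∈ ({g, h, g * h} : Set H) := by
  -- Sweedler expansion of `γ ⊗ z`
  have hsw : sweedler2 k H (γ ⊗ₜ[k] z)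
      = (2:k)⁻¹ • ((γ ⊗ₜ[k] z) ⊗ₜ[k] (γ ⊗ₜ[k] z) + (γ ⊗ₜ[k] (g*z)) ⊗ₜ[k] (γ ⊗ₜ[k] z)
        + (γ ⊗ₜ[k] z) ⊗ₜ[k] (γ ⊗ₜ[k] (h*z)) - (γ ⊗ₜ[k] (g*z)) ⊗ₜ[k] (γ ⊗ₜ[k] (h*z))) := by
    simp only [sweedler2, LinearMap.coe_comp, Function.comp_apply, LinearEquiv.coe_coe,
      TensorProduct.map_tmul, hKP.comul_z, hcγ, TensorProduct.tmul_smul,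
      TensorProduct.tmul_add, TensorProduct.tmul_sub, map_smul, map_add, map_sub,
      TensorProduct.tensorTensorTensorComm_tmul]
  -- the left action by `γ` is involutive
  have hLL : ∀ y : H, lact (γ ⊗ₜ[k] lact (γ ⊗ₜ[k] y)) = y := by
    intro y
    have t := LinearMap.congr_fun hmp.left.mul_act ((γ ⊗ₜ[k] γ) ⊗ₜ[k] y)
    simp only [LinearMap.coe_comp, Function.comp_apply, LinearEquiv.coe_coe,
      TensorProduct.assoc_tmul, TensorProduct.map_tmul, LinearMap.id_coe, id_eq,
      LinearMap.mul'_apply, hγ2, hmp.left.one_act] at t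
    exact t
  -- matched pair condition mp5 at `γ ⊗ z`
  have h5 := LinearMap.congr_fun hmp.mp5 (γ ⊗ₜ[k] z)
  simp only [LinearMap.coe_comp, Function.comp_apply, hsw, map_smul, map_add, map_sub,
    TensorProduct.map_tmul, LinearEquiv.coe_coe, TensorProduct.comm_tmul] at h5
  have h5' := congrArg (fun t => (2:k) • t) h5
  simp only [smul_smul] at h5'
  norm_num at h5'
  -- push the first legs back through the (involutive) left action by γ
  set Lg : H →ₗ[k] H := lact ∘ₗ (TensorProduct.mk k H H) γ with hLgdef
  have hLg : ∀ y : H, Lg y = lact (γ ⊗ₜ[k] y) := by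
    intro y; simp [hLgdef, TensorProduct.mk_apply]
  have happ := congrArg (TensorProduct.map Lg (LinearMap.id : H →ₗ[k] H)) h5'
  simp only [map_add, map_sub, TensorProduct.map_tmul, LinearMap.id_coe, id_eq, hLg,
    hLL] at happ
  -- extract coordinates in the first leg
  have hph : ract (γ ⊗ₜ[k] (h*z)) = ract (γ ⊗ₜ[k] z) := by
    have t := congrArg (colCoord b 5) happ
    simp only [map_add, map_sub, colCoord_tmul, crepr_z hKP, crepr_gz hKP, crepr_hz hKP,
      Finsupp.single_apply, Fin.reduceEq, reduceIte, one_smul, zero_smul, add_zero,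
      zero_add, sub_zero, zero_sub, sub_eq_zero] at t
    first
    | exact t.symm
    | exact (sub_eq_zero.mp t.symm).symm
    | exact sub_eq_zero.mp t
  have hpg : ract (γ ⊗ₜ[k] (g*z)) = ract (γ ⊗ₜ[k] z) := by
    have t := congrArg (colCoord b 6) happ
    simp only [map_add, map_sub, colCoord_tmul, crepr_z hKP, crepr_gz hKP, crepr_hz hKP,
      Finsupp.single_apply, Fin.reduceEq, reduceIte, one_smul, zero_smul, add_zero,
      zero_add, sub_zero, zero_sub, sub_eq_zero] at t
    first
    | exact t.symm
    | exact (sub_eq_zero.mp t.symm).symm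
    | exact sub_eq_zero.mp t
  -- group-likeness
  have hgl : Coalgebra.comul (R := k) (ract (γ ⊗ₜ[k] z))
      = ract (γ ⊗ₜ[k] z) ⊗ₜ[k] ract (γ ⊗ₜ[k] z) := by
    have t := LinearMap.congr_fun hmp.right.comul_comp (γ ⊗ₜ[k] z)
    simp only [LinearMap.coe_comp, Function.comp_apply, hsw, map_smul, map_add, map_sub,
      TensorProduct.map_tmul] at t
    rw [hpg, hph] at t
    rw [t]
    module
  have hεu : Coalgebra.counit (R := k) (ract (γ ⊗ₜ[k] z)) = 1 := by
    have t := LinearMap.congr_fun hmp.right.counit_comp (γ ⊗ₜ[k] z)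
    simp only [LinearMap.coe_comp, Function.comp_apply, TensorProduct.map_tmul,
      LinearEquiv.coe_coe, TensorProduct.lid_tmul, hKP.counit_z, hεγ, smul_eq_mul,
      mul_one, one_mul] at t
    exact t
  -- ract (γ ⊗ z) ≠ 1
  have hact2 : ∀ (a y : H), ract (ract (y ⊗ₜ[k] a) ⊗ₜ[k] a) = ract (y ⊗ₜ[k] (a*a)) := by
    intro a y
    have t := LinearMap.congr_fun hmp.right.act_mul ((y ⊗ₜ[k] a) ⊗ₜ[k] a)
    simp only [LinearMap.coe_comp, Function.comp_apply, LinearEquiv.coe_coe,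
      TensorProduct.assoc_tmul, TensorProduct.map_tmul, LinearMap.id_coe, id_eq,
      LinearMap.mul'_apply] at t
    exact t
  have hne : ract (γ ⊗ₜ[k] z) ≠ 1 := by
    intro h1
    have s1 : ract (γ ⊗ₜ[k] (z*z)) = 1 := by
      rw [← hact2 z γ, h1, hmp.mp4, hKP.counit_z, one_smul]
    have s2 : ract (ract (γ ⊗ₜ[k] (z*z)) ⊗ₜ[k] (z*z)) = γ := by
      rw [hact2 (z*z) γ, Pz4 hKP, hmp.right.act_one]
    rw [s1, hmp.mp4, hEzz hKP, one_smul] at s2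
    exact hγ1 s2.symm
  have hmem := grouplike_mem hKP (ract (γ ⊗ₜ[k] z)) hgl hεu
  rcases hmem with h1 | hmem
  · exact absurd h1 hne
  · exact hmem

end KPAux
end KPAux

end
/-- For every matched pair of actions `(⇀, ↼)` on the Kac–Paljutkin algebra `H₈`,
each of `z ⇀ g`, `z ⇀ h`, `z ⇀ gh` is a group-like element different from `1`, hence
lies in `{g, h, gh}`; likewise each of `g ↼ z`, `h ↼ z`, `gh ↼ z` lies in `{g, h, gh}`. -/
theorem z_acts_grouplike_of_matchedPair {k H : Type} [Field k] [CharZero k] [IsAlgClosed k]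
    [Ring H] [HopfAlgebra k H] (g h z : H) (b : Module.Basis (Fin 8) k H)
    (hKP : IsKacPaljutkin k H g h z b)
    (lact ract : H ⊗[k] H →ₗ[k] H) (hmp : IsMatchedPairOfActions lact ract) :
    (∀ x ∈ ({g, h, g * h} : Set H),
      Coalgebra.comul (R := k) (lact (z ⊗ₜ[k] x)) = lact (z ⊗ₜ[k] x) ⊗ₜ[k] lact (z ⊗ₜ[k] x) ∧
      Coalgebra.counit (R := k) (lact (z ⊗ₜ[k] x)) = 1 ∧
      lact (z ⊗ₜ[k] x) ≠ 1 ∧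
      lact (z ⊗ₜ[k] x) ∈ ({g, h, g * h} : Set H)) ∧
    (∀ x ∈ ({g, h, g * h} : Set H), ract (x ⊗ₜ[k] z) ∈ ({g, h, g * h} : Set H)) := by
  have hg1 : g ≠ (1 : H) := by
    intro e
    have : (1 : Fin 8) = 0 := b.injective (by rw [KPAux.hb1 hKP, KPAux.hb0 hKP, e])
    simp at this
  have hh1 : h ≠ (1 : H) := by
    intro e
    have : (2 : Fin 8) = 0 := b.injective (by rw [KPAux.hb2 hKP, KPAux.hb0 hKP, e])
    simp at this
  have hgh1 : g * h ≠ (1 : H) := by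
    intro e
    have : (3 : Fin 8) = 0 := b.injective (by rw [KPAux.hb3 hKP, KPAux.hb0 hKP, e])
    simp at this
  constructor
  · intro x hx
    simp only [Set.mem_insert_iff, Set.mem_singleton_iff] at hx
    rcases hx with hx | hx | hx <;> rw [hx]
    · exact KPAux.left_act hKP lact ract hmp g hKP.g_sq hg1 hKP.comul_g hKP.counit_g
    · exact KPAux.left_act hKP lact ract hmp h hKP.h_sq hh1 hKP.comul_h hKP.counit_h
    · exact KPAux.left_act hKP lact ract hmp (g*h) (KPAux.Pghgh hKP) hgh1
        (KPAux.hC3 hKP) (KPAux.hE3 hKP)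
  · intro x hx
    simp only [Set.mem_insert_iff, Set.mem_singleton_iff] at hx
    rcases hx with hx | hx | hx <;> rw [hx]
    · exact KPAux.right_act hKP lact ract hmp g hKP.g_sq hg1 hKP.comul_g hKP.counit_g
    · exact KPAux.right_act hKP lact ract hmp h hKP.h_sq hh1 hKP.comul_h hKP.counit_h
    · exact KPAux.right_act hKP lact ract hmp (g*h) (KPAux.Pghgh hKP) hgh1
        (KPAux.hC3 hKP) (KPAux.hE3 hKP)
end
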